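/- arXiv:1407.3709 — 4 statements merged into one kernel-verified Lean document; each statement's English description precedes it below -/
import Mathlib

section
/- Let k be a nonnegative integer, 0 < α < 1, and m a nonnegative integer. The map τ_m : C^{k,α}_{0^m} → C^{k,α}_ℂ defined by τ_m((1-ζ)^m v) = v is an isometric Banach space isomorphism from C^{k,α}_{0^m} onto the closed subspace R_m = { v ∈ C^{k,α}_ℂ : v(ζ) = (-1)^m ζ^{-m} conj(v(ζ)) for all ζ ∈ bΔ } of C^{k,α}_ℂ. -/
noncomputable section

open Complex Metric Set Finset
open scoped Classical

/-- The closed unit disc in `ℂ`, as a type. -/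
abbrev ClosedDisc : Type := (Metric.closedBall (0 : ℂ) 1 : Set ℂ)

/-- The inclusion of the unit circle `bΔ` into the closed unit disc. -/
def bd (z : Circle) : ClosedDisc :=
  ⟨(z : ℂ), by simp [Metric.mem_closedBall, dist_zero_right, Circle.norm_coe]⟩

/-- Negation on the circle. -/
def negCircle (z : Circle) : Circle :=
  ⟨-(z : ℂ), mem_sphere_zero_iff_norm.2 (by simp [Circle.norm_coe])⟩

/-- The angular lift of a function on the unit circle. -/
def liftC (f : Circle → ℂ) : ℝ → ℂ := fun θ => f (Circle.exp θ)

/-- `f` belongs to `C^{k,α}_ℂ(bΔ)`: its angular lift is `C^k` and the `k`-th derivative of the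
lift is `α`-Hölder. -/
def IsCkC (k : ℕ) (α : ℝ) (f : Circle → ℂ) : Prop :=
  ContDiff ℝ (k : ℕ∞) (liftC f) ∧
    ∃ C : NNReal, HolderWith C α.toNNReal (iteratedDeriv k (liftC f))

/-- `f` takes real values. -/
def IsRealValued (f : Circle → ℂ) : Prop := ∀ z, (f z).im = 0

/-- The space `C^{k,α} = C^{k,α}(bΔ, ℝ)` of real-valued Hölder functions. -/
def CkR (k : ℕ) (α : ℝ) : Set (Circle → ℂ) := {f | IsCkC k α f ∧ IsRealValued f}

/-- The space `C^{k,α}_ℂ`. -/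
def CkC (k : ℕ) (α : ℝ) : Set (Circle → ℂ) := {f | IsCkC k α f}

/-- The odd real-valued functions of class `C^{k,α}`. -/
def CkOdd (k : ℕ) (α : ℝ) : Set (Circle → ℂ) :=
  {f | IsCkC k α f ∧ IsRealValued f ∧ ∀ z : Circle, f (negCircle z) = -f z}

/-- The even real-valued functions of class `C^{k,α}`. -/
def CkEven (k : ℕ) (α : ℝ) : Set (Circle → ℂ) :=
  {f | IsCkC k α f ∧ IsRealValued f ∧ ∀ z : Circle, f (negCircle z) = f z}

/-- The subspace `R_m = {v ∈ C^{k,α}_ℂ | v(ζ) = (-1)^m ζ^{-m} conj (v ζ)}`. -/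
def Rm (k : ℕ) (α : ℝ) (m : ℤ) : Set (Circle → ℂ) :=
  {v | IsCkC k α v ∧
    ∀ z : Circle, v z = (-1 : ℂ) ^ m * (z : ℂ) ^ (-m) * (starRingEnd ℂ) (v z)}

/-- The space `C^{k,α}_{0^m}` of real-valued functions of the form `(1-ζ)^m v`,
`v ∈ C^{k,α}_ℂ`. -/
def C0m (k : ℕ) (α : ℝ) (m : ℕ) : Set (Circle → ℂ) :=
  {φ | IsRealValued φ ∧ ∃ v, IsCkC k α v ∧ ∀ z : Circle, φ z = (1 - (z : ℂ)) ^ m * v z}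

/-- Sup norm of the lift. -/
def supN (g : ℝ → ℂ) : ℝ := ⨆ θ : ℝ, ‖g θ‖

/-- Hölder seminorm (computed through the angular lift). -/
def holderSem (α : ℝ) (g : ℝ → ℂ) : ℝ :=
  ⨆ p : ℝ × ℝ, if (Circle.exp p.1 : ℂ) = Circle.exp p.2 then 0
    else ‖g p.1 - g p.2‖ / ‖(Circle.exp p.1 : ℂ) - (Circle.exp p.2 : ℂ)‖ ^ α

/-- The `C^{k,α}` norm. -/
def normCkR (k : ℕ) (α : ℝ) (f : Circle → ℂ) : ℝ :=
  (∑ j ∈ Finset.range (k + 1), supN (iteratedDeriv j (liftC f))) +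
    holderSem α (iteratedDeriv k (liftC f))

/-- The `C^{k,α}_ℂ` norm `‖Re v‖ + ‖Im v‖`. -/
def normCkC (k : ℕ) (α : ℝ) (f : Circle → ℂ) : ℝ :=
  normCkR k α (fun z => ((f z).re : ℂ)) + normCkR k α (fun z => ((f z).im : ℂ))

/-- The norm of `C^{k,α}_{0^m}`: `‖(1-ζ)^m v‖ = ‖v‖_{C^{k,α}_ℂ}`. -/
def normC0m (k : ℕ) (α : ℝ) (m : ℕ) (φ : Circle → ℂ) : ℝ :=
  sInf {r | ∃ v, IsCkC k α v ∧ (∀ z : Circle, φ z = (1 - (z : ℂ)) ^ m * v z) ∧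
    r = normCkC k α v}

/-- Extension of a function on the closed disc to the plane (by junk value `0`). -/
def extD (f : ClosedDisc → ℂ) : ℂ → ℂ :=
  fun z => if h : z ∈ Metric.closedBall (0 : ℂ) 1 then f ⟨z, h⟩ else 0

/-- Boundary trace of a function on the closed disc. -/
def bTrace (f : ClosedDisc → ℂ) : Circle → ℂ := fun z => f (bd z)

/-- `f ∈ A^{k,α}`: `f` is continuous on the closed disc, holomorphic on the open disc, and its
boundary trace is of class `C^{k,α}_ℂ`. -/
def IsA (k : ℕ) (α : ℝ) (f : ClosedDisc → ℂ) : Prop :=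
  ContinuousOn (extD f) (Metric.closedBall 0 1) ∧
    DifferentiableOn ℂ (extD f) (Metric.ball 0 1) ∧ IsCkC k α (bTrace f)

/-- The space `(1-ζ)^m A^{k,α}`. -/
def mA (k : ℕ) (α : ℝ) (m : ℕ) : Set (ClosedDisc → ℂ) :=
  {φ | ∃ f, IsA k α f ∧ ∀ z : ClosedDisc, φ z = (1 - (z : ℂ)) ^ m * f z}

/-- The norm of `A^{k,α}` (the `C^{k,α}_ℂ` norm of the boundary trace). -/
def normA (k : ℕ) (α : ℝ) (f : ClosedDisc → ℂ) : ℝ := normCkC k α (bTrace f)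

/-- The norm of `(1-ζ)^m A^{k,α}`: `‖(1-ζ)^m f‖ = ‖f‖`. -/
def normmA (k : ℕ) (α : ℝ) (m : ℕ) (φ : ClosedDisc → ℂ) : ℝ :=
  sInf {r | ∃ f, IsA k α f ∧ (∀ z : ClosedDisc, φ z = (1 - (z : ℂ)) ^ m * f z) ∧
    r = normA k α f}

/-- A subset `K` of a real vector space (in practice, a linear subspace) has real dimension `d`:
there are `d` linearly independent elements of `K` spanning `K`. -/
def HasRealDim {X : Type*} [AddCommGroup X] [Module ℝ X] (K : Set X) (d : ℕ) : Prop :=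
  ∃ b : Fin d → X, (∀ i, b i ∈ K) ∧ LinearIndependent ℝ b ∧
    ∀ f ∈ K, ∃ c : Fin d → ℝ, f = ∑ i, c i • b i

private lemma circle_exp_surj : Function.Surjective Circle.exp := by
  intro z
  refine ⟨Complex.arg z, Circle.ext ?_⟩
  rw [Circle.coe_exp]
  have := Complex.norm_mul_exp_arg_mul_I (z : ℂ)
  rwa [Circle.norm_coe, Complex.ofReal_one, one_mul] at this

private lemma dense_ne_one : Dense {θ : ℝ | Circle.exp θ ≠ 1} := by
  have hsub : {θ : ℝ | Circle.exp θ = 1} ⊆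
      Set.range (fun n : ℤ => (n : ℝ) * (2 * Real.pi)) := by
    intro θ hθ
    obtain ⟨n, hn⟩ := Circle.exp_eq_one.mp hθ
    exact ⟨n, hn.symm⟩
  have hc : Set.Countable {θ : ℝ | Circle.exp θ = 1} :=
    (Set.countable_range _).mono hsub
  have := hc.dense_compl ℝ
  convert this using 1
  rfl

private lemma cancel_unique (m : ℕ) {v w : Circle → ℂ} (hv : Continuous (liftC v))
    (hw : Continuous (liftC w))
    (h : ∀ z : Circle, (1 - (z : ℂ)) ^ m * v z = (1 - (z : ℂ)) ^ m * w z) : v = w := by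
  have hl : liftC v = liftC w := by
    apply Continuous.ext_on dense_ne_one hv hw
    intro θ hθ
    have h1 : (1 - (Circle.exp θ : ℂ)) ≠ 0 := by
      rw [sub_ne_zero]
      intro hc
      exact hθ (Circle.coe_eq_one.mp hc.symm)
    exact mul_left_cancel₀ (pow_ne_zero m h1) (h (Circle.exp θ))
  funext z
  obtain ⟨θ, rfl⟩ := circle_exp_surj z
  exact congrFun hl θ

private lemma isCkC_add {k : ℕ} {α : ℝ} {v w : Circle → ℂ} (hv : IsCkC k α v)
    (hw : IsCkC k α w) : IsCkC k α (v + w) := by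
  have hl : liftC (v + w) = liftC v + liftC w := rfl
  refine ⟨by rw [hl]; exact hv.1.add hw.1, ?_⟩
  obtain ⟨C, hC⟩ := hv.2
  obtain ⟨C', hC'⟩ := hw.2
  have hder : iteratedDeriv k (liftC (v + w)) =
      iteratedDeriv k (liftC v) + iteratedDeriv k (liftC w) := by
    funext x
    rw [hl, Pi.add_apply]
    simp only [iteratedDeriv_eq_iteratedFDeriv]
    rw [iteratedFDeriv_add_apply (hv.1.of_le (by exact_mod_cast le_refl (k : ℕ∞))).contDiffAt
      (hw.1.of_le (by exact_mod_cast le_refl (k : ℕ∞))).contDiffAt]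
    rfl
  rw [hder]
  exact ⟨C + C', hC.add hC'⟩

private lemma isCkC_smul {k : ℕ} {α : ℝ} {v : Circle → ℂ} (c : ℝ) (hv : IsCkC k α v) :
    IsCkC k α (c • v) := by
  have hl : liftC (c • v) = (c : ℂ) • liftC v := by
    funext θ
    simp [liftC, Complex.real_smul]
  refine ⟨by rw [hl]; exact hv.1.const_smul (c : ℂ), ?_⟩
  obtain ⟨C, hC⟩ := hv.2
  have hder : iteratedDeriv k (liftC (c • v)) = (c : ℂ) • iteratedDeriv k (liftC v) := by
    funext x
    rw [hl]
    simp only [iteratedDeriv_eq_iteratedFDeriv]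
    rw [iteratedFDeriv_const_smul_apply (hv.1.of_le (by exact_mod_cast le_refl (k : ℕ∞))).contDiffAt]
    rfl
  rw [hder]
  exact ⟨C * ‖(c : ℂ)‖₊, hC.smul _⟩

private lemma conj_coe_circle (z : Circle) : (starRingEnd ℂ) (z : ℂ) = (z : ℂ)⁻¹ := by
  rw [← Circle.coe_inv_eq_conj, Circle.coe_inv]

private lemma key_conj (m : ℕ) (v : Circle → ℂ) (z : Circle) :
    (1 - (z : ℂ)) ^ m * ((-1 : ℂ) ^ (m : ℤ) * (z : ℂ) ^ (-(m : ℤ)) * (starRingEnd ℂ) (v z)) =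
      (starRingEnd ℂ) ((1 - (z : ℂ)) ^ m * v z) := by
  have hz : (z : ℂ) ≠ 0 := z.coe_ne_zero
  rw [map_mul, map_pow, map_sub, map_one, conj_coe_circle]
  rw [zpow_neg, zpow_natCast, zpow_natCast, ← inv_pow]
  have h1 : (1 : ℂ) - (z : ℂ)⁻¹ = (1 - z) * (-1) * (z : ℂ)⁻¹ := by
    field_simp
    ring
  rw [h1, mul_pow, mul_pow]
  ring

private lemma w_conj_eq (m : ℕ) (v : Circle → ℂ) (z : Circle) :
    (-1 : ℂ) ^ (m : ℤ) * (z : ℂ) ^ (-(m : ℤ)) * (starRingEnd ℂ) (v z) =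
      (starRingEnd ℂ) ((-1 : ℂ) ^ m * (z : ℂ) ^ m * v z) := by
  rw [map_mul, map_mul, map_pow, map_pow, conj_coe_circle, map_neg, map_one]
  rw [zpow_neg, zpow_natCast, zpow_natCast, inv_pow]

private lemma cont_coe_exp : Continuous (fun θ : ℝ => (Circle.exp θ : ℂ)) := by
  have h : (fun θ : ℝ => (Circle.exp θ : ℂ)) =
      fun θ : ℝ => Complex.exp ((θ : ℂ) * Complex.I) :=
    funext fun θ => Circle.coe_exp θ
  rw [h]
  exact Complex.continuous_exp.comp (Complex.continuous_ofReal.mul continuous_const)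

/-- The map `τ_m : C^{k,α}_{0^m} → C^{k,α}_ℂ`, `τ_m((1-ζ)^m v) = v`, is an
isometric Banach space isomorphism from `C^{k,α}_{0^m}` onto the closed subspace `R_m`. -/
theorem stmt_0 (k : ℕ) (α : ℝ) (hα : 0 < α) (hα' : α < 1) (m : ℕ) :
    ∃ τ : (Circle → ℂ) → (Circle → ℂ),
      -- `τ_m ((1-ζ)^m v) = v`
      (∀ v : Circle → ℂ, IsCkC k α v →
        (∀ z : Circle, ((1 - (z : ℂ)) ^ m * v z).im = 0) →
        τ (fun z => (1 - (z : ℂ)) ^ m * v z) = v) ∧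
      -- `τ_m` maps `C^{k,α}_{0^m}` bijectively onto `R_m`
      Set.BijOn τ (C0m k α m) (Rm k α (m : ℤ)) ∧
      -- `τ_m` is `ℝ`-linear on `C^{k,α}_{0^m}`
      (∀ φ ψ, φ ∈ C0m k α m → ψ ∈ C0m k α m → τ (φ + ψ) = τ φ + τ ψ) ∧
      (∀ (c : ℝ) (φ), φ ∈ C0m k α m → τ (c • φ) = c • τ φ) ∧
      -- `τ_m` is isometric
      (∀ φ ∈ C0m k α m, normC0m k α m φ = normCkC k α (τ φ)) := by
    classical
  let P : (Circle → ℂ) → (Circle → ℂ) → Prop :=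
    fun φ v => IsCkC k α v ∧ ∀ z : Circle, φ z = (1 - (z : ℂ)) ^ m * v z
  let τ : (Circle → ℂ) → (Circle → ℂ) := fun φ => if h : ∃ v, P φ v then h.choose else 0
  have huniq : ∀ {φ v w}, P φ v → P φ w → v = w := by
    intro φ v w hv hw
    refine cancel_unique m hv.1.1.continuous hw.1.1.continuous fun z => ?_
    rw [← hv.2 z, ← hw.2 z]
  have htau : ∀ {φ v}, P φ v → τ φ = v := by
    intro φ v hv
    have h : ∃ v, P φ v := ⟨v, hv⟩
    show (if h : ∃ v, P φ v then h.choose else 0) = v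
    rw [dif_pos h]
    exact huniq h.choose_spec hv
  have ha : ∀ v, IsCkC k α v → (∀ z : Circle, ((1 - (z : ℂ)) ^ m * v z).im = 0) →
      τ (fun z => (1 - (z : ℂ)) ^ m * v z) = v := fun v hv _ => htau ⟨hv, fun z => rfl⟩
  have hmaps : ∀ φ ∈ C0m k α m, τ φ ∈ Rm k α (m : ℤ) := by
    intro φ hφ
    simp only [C0m, Set.mem_setOf_eq] at hφ
    obtain ⟨hre, v, hv, hφv⟩ := hφ
    rw [htau ⟨hv, hφv⟩]
    refine ⟨hv, ?_⟩
    set w : Circle → ℂ :=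
      fun z => (-1 : ℂ) ^ (m : ℤ) * (z : ℂ) ^ (-(m : ℤ)) * (starRingEnd ℂ) (v z) with hw
    have hwc : Continuous (liftC w) := by
      have hlw : liftC w = fun θ =>
          (starRingEnd ℂ) ((-1 : ℂ) ^ m * (Circle.exp θ : ℂ) ^ m * liftC v θ) :=
        funext fun θ => w_conj_eq m v (Circle.exp θ)
      rw [hlw]
      exact Complex.continuous_conj.comp
        ((continuous_const.mul (cont_coe_exp.pow m)).mul hv.1.continuous)
    have heq : ∀ z : Circle, (1 - (z : ℂ)) ^ m * v z = (1 - (z : ℂ)) ^ m * w z := by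
      intro z
      have h1 : (1 - (z : ℂ)) ^ m * w z =
          (starRingEnd ℂ) ((1 - (z : ℂ)) ^ m * v z) := key_conj m v z
      rw [h1, ← hφv z]
      exact (Complex.conj_eq_iff_im.mpr (hre z)).symm
    have hvw := cancel_unique m hv.1.continuous hwc heq
    intro z
    exact congrFun hvw z
  have hinj : Set.InjOn τ (C0m k α m) := by
    intro φ hφ ψ hψ hτ
    simp only [C0m, Set.mem_setOf_eq] at hφ hψ
    obtain ⟨hre, v, hv, hφv⟩ := hφ
    obtain ⟨hre', u, hu, hψu⟩ := hψ
    have h1 : τ φ = v := htau ⟨hv, hφv⟩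
    have h2 : τ ψ = u := htau ⟨hu, hψu⟩
    funext z
    rw [hφv z, hψu z, ← h1, ← h2, hτ]
  have hsurj : Set.SurjOn τ (C0m k α m) (Rm k α (m : ℤ)) := by
    intro v hv
    simp only [Rm, Set.mem_setOf_eq] at hv
    obtain ⟨hvCk, hvrel⟩ := hv
    set φ : Circle → ℂ := fun z => (1 - (z : ℂ)) ^ m * v z with hφ
    have hre : IsRealValued φ := by
      intro z
      have hc : (starRingEnd ℂ) (φ z) = φ z := by
        have h1 := (key_conj m v z).symm
        calc (starRingEnd ℂ) ((1 - (z : ℂ)) ^ m * v z)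
            = (1 - (z : ℂ)) ^ m *
              ((-1 : ℂ) ^ (m : ℤ) * (z : ℂ) ^ (-(m : ℤ)) * (starRingEnd ℂ) (v z)) := h1
          _ = (1 - (z : ℂ)) ^ m * v z := by rw [← hvrel z]
      exact Complex.conj_eq_iff_im.mp hc
    refine ⟨φ, ?_, htau ⟨hvCk, fun z => rfl⟩⟩
    exact ⟨hre, v, hvCk, fun z => rfl⟩
  have hadd : ∀ φ ψ, φ ∈ C0m k α m → ψ ∈ C0m k α m → τ (φ + ψ) = τ φ + τ ψ := by
    intro φ ψ hφ hψ
    simp only [C0m, Set.mem_setOf_eq] at hφ hψ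
    obtain ⟨_, v, hv, hφv⟩ := hφ
    obtain ⟨_, u, hu, hψu⟩ := hψ
    rw [htau ⟨hv, hφv⟩, htau ⟨hu, hψu⟩]
    refine htau ⟨isCkC_add hv hu, fun z => ?_⟩
    simp only [Pi.add_apply]
    rw [hφv z, hψu z]
    ring
  have hsmul : ∀ (c : ℝ) (φ), φ ∈ C0m k α m → τ (c • φ) = c • τ φ := by
    intro c φ hφ
    simp only [C0m, Set.mem_setOf_eq] at hφ
    obtain ⟨_, v, hv, hφv⟩ := hφ
    rw [htau ⟨hv, hφv⟩]
    refine htau ⟨isCkC_smul c hv, fun z => ?_⟩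
    simp only [Pi.smul_apply]
    rw [hφv z, Complex.real_smul, Complex.real_smul]
    ring
  have hiso : ∀ φ ∈ C0m k α m, normC0m k α m φ = normCkC k α (τ φ) := by
    intro φ hφ
    simp only [C0m, Set.mem_setOf_eq] at hφ
    obtain ⟨hre, v, hv, hφv⟩ := hφ
    have h1 : τ φ = v := htau ⟨hv, hφv⟩
    have hset : {r | ∃ u, IsCkC k α u ∧ (∀ z : Circle, φ z = (1 - (z : ℂ)) ^ m * u z) ∧
        r = normCkC k α u} = {normCkC k α v} := by
      ext r
      simp only [Set.mem_setOf_eq, Set.mem_singleton_iff]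
      constructor
      · rintro ⟨u, hu, hφu, rfl⟩
        rw [huniq ⟨hu, hφu⟩ ⟨hv, hφv⟩]
      · rintro rfl
        exact ⟨v, hv, hφv, rfl⟩
    rw [normC0m, hset, csInf_singleton, h1]
  exact ⟨τ, ha, ⟨hmaps, hinj, hsurj⟩, hadd, hsmul, hiso⟩
end
end

section
/- Let k be a nonnegative integer, 0 < α < 1, and let m be an odd nonnegative integer. The map v(ζ) ↦ i ζ^m v(ζ²) sends R_m = { v ∈ C^{k,α}_ℂ : v(ζ) = (-1)^m ζ^{-m} conj(v(ζ)) for all ζ ∈ bΔ } isomorphically onto the space C^{k,α}_o of odd real-valued C^{k,α} functions on bΔ (those u ∈ C^{k,α} with u(-ζ) = -u(ζ) for all ζ ∈ bΔ). -/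
noncomputable section

open Complex Metric Set Finset
open scoped Classical

namespace S3
open Complex Function

noncomputable def Nn (k : ℕ) (α : ℝ) (g : ℝ → ℂ) : ℝ :=
  (∑ j ∈ Finset.range (k + 1), supN (iteratedDeriv j g)) + holderSem α (iteratedDeriv k g)

lemma normCkR_eq (k : ℕ) (α : ℝ) (f : Circle → ℂ) : normCkR k α f = Nn k α (liftC f) := rfl

lemma exp_sub_exp (x y : ℝ) :
    Complex.exp (x * I) - Complex.exp (y * I)
      = Complex.exp ((((x + y) / 2 : ℝ)) * I) * (2 * (Real.sin ((x - y) / 2) : ℝ) * I) := by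
  have h2 : ∀ t : ℝ, Complex.exp ((t : ℂ) * I) - Complex.exp ((-t : ℝ) * I)
      = 2 * (Real.sin t : ℝ) * I := by
    intro t
    rw [Complex.exp_mul_I, Complex.exp_mul_I, Complex.ofReal_sin]
    push_cast
    rw [Complex.cos_neg, Complex.sin_neg]
    ring
  have h1 : Complex.exp ((x : ℂ) * I) - Complex.exp ((y : ℂ) * I)
      = Complex.exp ((((x + y) / 2 : ℝ)) * I) *
        (Complex.exp ((((x - y) / 2 : ℝ)) * I) - Complex.exp (((-((x - y) / 2) : ℝ)) * I)) := by
    rw [mul_sub, ← Complex.exp_add, ← Complex.exp_add]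
    congr 2 <;> push_cast <;> ring
  rw [h1, h2]

lemma norm_exp_sub_exp_le (x y : ℝ) :
    ‖Complex.exp ((x : ℂ) * I) - Complex.exp ((y : ℂ) * I)‖ = 2 * |Real.sin ((x - y) / 2)| := by
  rw [exp_sub_exp, norm_mul, Complex.norm_exp_ofReal_mul_I, one_mul]
  rw [norm_mul, norm_mul, Complex.norm_real, Real.norm_eq_abs, Complex.norm_I, mul_one]
  simp

lemma chord_eq (x y : ℝ) :
    ‖(Circle.exp x : ℂ) - Circle.exp y‖ = 2 * |Real.sin ((x - y) / 2)| := by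
  rw [Circle.coe_exp, Circle.coe_exp, norm_exp_sub_exp_le]

lemma chord_le (x y : ℝ) : ‖(Circle.exp x : ℂ) - Circle.exp y‖ ≤ |x - y| := by
  rw [chord_eq]
  have := Real.abs_sin_le_abs (x := (x - y) / 2)
  rw [abs_div, show |(2:ℝ)| = 2 by norm_num] at this
  linarith

lemma abs_sin_eq (t : ℝ) (ht : |t| ≤ Real.pi) : |Real.sin t| = Real.sin |t| := by
  rcases le_or_gt 0 t with h | h
  · rw [_root_.abs_of_nonneg h, _root_.abs_of_nonneg (Real.sin_nonneg_of_nonneg_of_le_pi h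
      (by rwa [_root_.abs_of_nonneg h] at ht))]
  · have h1 : Real.sin (-t) = -Real.sin t := Real.sin_neg t
    have h2 : 0 ≤ Real.sin (-t) := Real.sin_nonneg_of_nonneg_of_le_pi (by linarith)
      (by rwa [_root_.abs_of_neg h] at ht)
    rw [_root_.abs_of_neg h, h1]
    rw [h1] at h2
    rw [_root_.abs_of_nonpos (by linarith)]

lemma chord_ge (x y : ℝ) (h : |x - y| ≤ Real.pi) :
    2 / Real.pi * |x - y| ≤ ‖(Circle.exp x : ℂ) - Circle.exp y‖ := by
  rw [chord_eq]
  have habs2 : |(2:ℝ)| = 2 := by norm_num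
  have ht2 : |(x - y) / 2| ≤ Real.pi / 2 := by rw [abs_div, habs2]; linarith
  have h1 : |Real.sin ((x - y) / 2)| = Real.sin |(x - y) / 2| :=
    abs_sin_eq _ (le_trans ht2 (by linarith [Real.pi_pos]))
  have h2 := Real.mul_le_sin (x := |(x - y) / 2|) (abs_nonneg _) ht2
  rw [h1, abs_div, habs2]
  rw [abs_div, habs2] at h2
  linarith

lemma periodic_liftC (f : Circle → ℂ) : Periodic (liftC f) (2 * Real.pi) := by
  intro θ
  unfold liftC
  congr 1
  exact Circle.exp_eq_exp.mpr ⟨1, by push_cast; ring⟩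

lemma Periodic.deriv'' {g : ℝ → ℂ} {c : ℝ} (h : Periodic g c) : Periodic (deriv g) c := by
  intro x
  have h1 : deriv (fun y => g (y + c)) x = deriv g (x + c) := deriv_comp_add_const (f := g) (a := c) (x := x)
  have h2 : (fun y => g (y + c)) = g := funext fun y => h y
  rw [h2] at h1
  exact h1.symm

lemma periodic_iteratedDeriv {g : ℝ → ℂ} {c : ℝ} (h : Periodic g c) (n : ℕ) :
    Periodic (iteratedDeriv n g) c := by
  induction n with
  | zero => rw [iteratedDeriv_zero]; exact h
  | succ n ih => rw [iteratedDeriv_succ]; exact Periodic.deriv'' ih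

lemma bound_of_periodic {g : ℝ → ℂ} (hc : Continuous g) (hp : Periodic g (2 * Real.pi)) :
    ∃ M : ℝ, 0 ≤ M ∧ ∀ θ, ‖g θ‖ ≤ M := by
  obtain ⟨M, hM⟩ := (isCompact_Icc (a := (0:ℝ)) (b := 2 * Real.pi)).exists_bound_of_continuousOn
    hc.continuousOn
  refine ⟨max M 0, le_max_right _ _, fun θ => ?_⟩
  obtain ⟨y, hy, hxy⟩ := hp.exists_mem_Ico₀ (by positivity) θ
  rw [hxy]
  exact le_trans (hM y ⟨hy.1, hy.2.le⟩) (le_max_left _ _)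

lemma supN_nonneg (g : ℝ → ℂ) : 0 ≤ supN g := Real.iSup_nonneg fun θ => norm_nonneg _

lemma supN_le {g : ℝ → ℂ} {M : ℝ} (h0 : 0 ≤ M) (h : ∀ θ, ‖g θ‖ ≤ M) : supN g ≤ M :=
  Real.iSup_le h h0

lemma le_supN {g : ℝ → ℂ} {M : ℝ} (h : ∀ θ, ‖g θ‖ ≤ M) (θ : ℝ) : ‖g θ‖ ≤ supN g :=
  le_ciSup ⟨M, by rintro _ ⟨θ, rfl⟩; exact h θ⟩ θ

lemma holderSem_nonneg (α : ℝ) (g : ℝ → ℂ) : 0 ≤ holderSem α g :=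
  Real.iSup_nonneg fun p => by
    split
    · exact le_refl 0
    · exact div_nonneg (norm_nonneg _) (Real.rpow_nonneg (norm_nonneg _) _)

lemma holderSem_le {α : ℝ} {g : ℝ → ℂ} {C : ℝ} (hC : 0 ≤ C)
    (h : ∀ x y : ℝ, ‖g x - g y‖ ≤ C * ‖(Circle.exp x : ℂ) - Circle.exp y‖ ^ α) :
    holderSem α g ≤ C := by
  apply Real.iSup_le _ hC
  intro p
  split
  · exact hC
  · rename_i hne
    rw [div_le_iff₀ (by
      apply Real.rpow_pos_of_pos
      rw [norm_pos_iff, sub_ne_zero]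
      exact hne)]
    exact h p.1 p.2

lemma chordal_of_holderSem {α : ℝ} {g : ℝ → ℂ} (hper : Periodic g (2 * Real.pi))
    (hb : ∃ C : ℝ, 0 ≤ C ∧ ∀ x y : ℝ, ‖g x - g y‖ ≤ C * ‖(Circle.exp x : ℂ) - Circle.exp y‖ ^ α)
    (x y : ℝ) :
    ‖g x - g y‖ ≤ holderSem α g * ‖(Circle.exp x : ℂ) - Circle.exp y‖ ^ α := by
  obtain ⟨C, hC0, hC⟩ := hb
  by_cases hxy : (Circle.exp x : ℂ) = Circle.exp y
  · obtain ⟨n, hn⟩ := Circle.exp_eq_exp.mp (Subtype.coe_injective hxy)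
    have : g x = g y := by
      rw [hn]
      have := (hper.int_mul n) y
      rw [add_comm] at this ⊢
      simpa [mul_comm] using this
    rw [this, sub_self, norm_zero]
    exact mul_nonneg (holderSem_nonneg α g) (Real.rpow_nonneg (norm_nonneg _) _)
  · have hchord : (0:ℝ) < ‖(Circle.exp x : ℂ) - Circle.exp y‖ ^ α := by
      apply Real.rpow_pos_of_pos
      rw [norm_pos_iff, sub_ne_zero]
      exact hxy
    have hle : ‖g x - g y‖ / ‖(Circle.exp x : ℂ) - Circle.exp y‖ ^ α ≤ holderSem α g := by
      have hbdd : BddAbove (Set.range fun p : ℝ × ℝ =>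
          if (Circle.exp p.1 : ℂ) = Circle.exp p.2 then 0
          else ‖g p.1 - g p.2‖ / ‖(Circle.exp p.1 : ℂ) - Circle.exp p.2‖ ^ α) := by
        refine ⟨C, ?_⟩
        rintro _ ⟨p, rfl⟩
        dsimp only
        split
        · exact hC0
        · rename_i hne
          rw [div_le_iff₀ (by
            apply Real.rpow_pos_of_pos
            rw [norm_pos_iff, sub_ne_zero]
            exact hne)]
          exact hC p.1 p.2
      have := le_ciSup hbdd (x, y)
      rw [if_neg hxy] at this
      exact this
    rw [div_le_iff₀ hchord] at hle
    exact hle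

end S3
namespace S3
open Complex Function

lemma holderWith_of_dist {f : ℝ → ℂ} {C α : ℝ} (hC : 0 ≤ C) (hα : 0 ≤ α)
    (h : ∀ x y : ℝ, ‖f x - f y‖ ≤ C * |x - y| ^ α) :
    HolderWith C.toNNReal α.toNNReal f := by
  intro x y
  rw [edist_dist, edist_dist]
  have h1 : dist (f x) (f y) ≤ C * dist x y ^ α := by
    rw [dist_eq_norm, Real.dist_eq]; exact h x y
  calc ENNReal.ofReal (dist (f x) (f y)) ≤ ENNReal.ofReal (C * dist x y ^ α) :=
        ENNReal.ofReal_le_ofReal h1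
    _ = ENNReal.ofReal C * ENNReal.ofReal (dist x y ^ α) := ENNReal.ofReal_mul hC
    _ = ↑C.toNNReal * ENNReal.ofReal (dist x y) ^ ((α.toNNReal : ℝ)) := by
        rw [← ENNReal.ofReal_rpow_of_nonneg dist_nonneg hα, Real.coe_toNNReal α hα]
        rfl

lemma dist_of_holderWith {f : ℝ → ℂ} {C : NNReal} {α : ℝ} (hα : 0 ≤ α)
    (h : HolderWith C α.toNNReal f) (x y : ℝ) : ‖f x - f y‖ ≤ C * |x - y| ^ α := by
  have := h.dist_le x y
  rwa [dist_eq_norm, Real.dist_eq, Real.coe_toNNReal α hα] at this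

lemma chordal_of_dist {g : ℝ → ℂ} {C α : ℝ} (hα : 0 < α) (hα' : α < 1) (hC : 0 ≤ C)
    (hper : Periodic g (2 * Real.pi))
    (h : ∀ x y : ℝ, ‖g x - g y‖ ≤ C * |x - y| ^ α) (x y : ℝ) :
    ‖g x - g y‖ ≤ 2 * C * ‖(Circle.exp x : ℂ) - Circle.exp y‖ ^ α := by
  have hπ := Real.pi_pos
  set n : ℤ := round ((x - y) / (2 * Real.pi)) with hn
  set y' : ℝ := y + n * (2 * Real.pi) with hy'
  have hgy : g y' = g y := (hper.int_mul n) y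
  have hexp : Circle.exp y' = Circle.exp y := Circle.exp_eq_exp.mpr ⟨n, by rw [hy']⟩
  have hΔ : |x - y'| ≤ Real.pi := by
    have h1 := abs_sub_round ((x - y) / (2 * Real.pi))
    have h2 : x - y' = (2 * Real.pi) * ((x - y) / (2 * Real.pi) - n) := by
      rw [hy']; field_simp; ring
    rw [h2, abs_mul, abs_of_pos (by positivity)]
    nlinarith [h1]
  have h3 : |x - y'| ≤ Real.pi / 2 * ‖(Circle.exp x : ℂ) - Circle.exp y'‖ := by
    have h4 := chord_ge x y' hΔ
    calc |x - y'| = (Real.pi / 2) * (2 / Real.pi * |x - y'|) := by field_simp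
      _ ≤ (Real.pi / 2) * ‖(Circle.exp x : ℂ) - Circle.exp y'‖ :=
          mul_le_mul_of_nonneg_left h4 (by positivity)
  calc ‖g x - g y‖ = ‖g x - g y'‖ := by rw [hgy]
    _ ≤ C * |x - y'| ^ α := h x y'
    _ ≤ C * ((Real.pi / 2) * ‖(Circle.exp x : ℂ) - Circle.exp y'‖) ^ α := by
        exact mul_le_mul_of_nonneg_left
          (Real.rpow_le_rpow (abs_nonneg _) h3 hα.le) hC
    _ = C * ((Real.pi / 2) ^ α * ‖(Circle.exp x : ℂ) - Circle.exp y'‖ ^ α) := by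
        rw [Real.mul_rpow (by positivity) (norm_nonneg _)]
    _ ≤ C * (2 * ‖(Circle.exp x : ℂ) - Circle.exp y'‖ ^ α) := by
        apply mul_le_mul_of_nonneg_left _ hC
        apply mul_le_mul_of_nonneg_right _ (Real.rpow_nonneg (norm_nonneg _) α)
        calc (Real.pi / 2 : ℝ) ^ α ≤ (Real.pi / 2) ^ (1 : ℝ) :=
              Real.rpow_le_rpow_of_exponent_le (by nlinarith [Real.pi_gt_three]) hα'.le
          _ = Real.pi / 2 := Real.rpow_one _
          _ ≤ 2 := by nlinarith [Real.pi_le_four]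
    _ = 2 * C * ‖(Circle.exp x : ℂ) - Circle.exp y‖ ^ α := by rw [hexp]; ring

lemma le_pi_rpow {α t : ℝ} (hα : 0 < α) (hα' : α ≤ 1) (ht : 0 ≤ t) (htπ : t ≤ Real.pi) :
    t ≤ Real.pi * t ^ α := by
  have hπ := Real.pi_pos
  rcases eq_or_lt_of_le ht with h0 | h0
  · rw [← h0, Real.zero_rpow hα.ne']
    simp
  · have h1 : t = t ^ α * t ^ (1 - α) := by
      rw [← Real.rpow_add h0]
      norm_num
    have h2 : t ^ (1 - α) ≤ Real.pi := by
      calc t ^ (1 - α) ≤ Real.pi ^ (1 - α) := Real.rpow_le_rpow ht htπ (by linarith)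
        _ ≤ Real.pi ^ (1 : ℝ) := Real.rpow_le_rpow_of_exponent_le
            (by nlinarith [Real.pi_gt_three]) (by linarith)
        _ = Real.pi := Real.rpow_one _
    conv_lhs => rw [h1]
    calc t ^ α * t ^ (1 - α) ≤ t ^ α * Real.pi :=
          mul_le_mul_of_nonneg_left h2 (Real.rpow_nonneg ht α)
      _ = Real.pi * t ^ α := by ring

lemma rpow_le_one_add {t α : ℝ} (ht : 0 ≤ t) (hα : 0 < α) (hα' : α ≤ 1) : t ^ α ≤ 1 + t := by
  rcases le_or_gt t 1 with h | h
  · exact (Real.rpow_le_one ht h hα.le).trans (by linarith)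
  · calc t ^ α ≤ t ^ (1 : ℝ) := Real.rpow_le_rpow_of_exponent_le h.le hα'
      _ = t := Real.rpow_one _
      _ ≤ 1 + t := by linarith

lemma key (k : ℕ) (a : ℂ) (c lam : ℝ) {g : ℝ → ℂ} (hg : ContDiff ℝ (k : ℕ∞) g) :
    ∀ n : ℕ, n ≤ k → ∃ β : ℕ → ℂ,
      (∀ l, n < l → β l = 0) ∧
      (∑ l ∈ Finset.range (n + 1), ‖β l‖) ≤ ‖a‖ * (|c| + |lam|) ^ n ∧
      ∀ θ : ℝ, iteratedDeriv n (fun t : ℝ => a * Complex.exp (c * t * I) * g (lam * t)) θ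
        = Complex.exp (c * θ * I) *
            ∑ l ∈ Finset.range (n + 1), β l * iteratedDeriv l g (lam * θ) := by
  intro n
  induction n with
  | zero =>
    intro _
    refine ⟨fun l => if l = 0 then a else 0, ?_, ?_, ?_⟩
    · intro l hl
      show (if l = 0 then a else 0) = 0
      rw [if_neg (by omega)]
    · simp
    · intro θ
      rw [Finset.sum_range_one]
      simp only [iteratedDeriv_zero, reduceIte]
      ring
  | succ n ih =>
    intro hn
    obtain ⟨β, hβ0, hβs, hβf⟩ := ih (Nat.le_of_succ_le hn)
    have hE : ∀ θ : ℝ, HasDerivAt (fun t : ℝ => Complex.exp ((c : ℂ) * (t : ℂ) * I))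
        (((c : ℂ) * I) * Complex.exp ((c : ℂ) * (θ : ℂ) * I)) θ := by
      intro θ
      have hre : HasDerivAt (fun t : ℝ => (t : ℂ)) 1 θ := by
        simpa using (hasDerivAt_id θ).ofReal_comp
      have h1 : HasDerivAt (fun t : ℝ => (c : ℂ) * (t : ℂ) * I) ((c : ℂ) * 1 * I) θ :=
        (hre.const_mul (c : ℂ)).mul_const I
      have h2 := h1.cexp
      convert h2 using 1
      ring
    have hq : ∀ s : ℝ, HasDerivAt
        (fun s => ∑ l ∈ Finset.range (n + 1), β l * iteratedDeriv l g s)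
        (∑ l ∈ Finset.range (n + 1), β l * iteratedDeriv (l + 1) g s) s := by
      intro s
      apply HasDerivAt.fun_sum
      intro l hl
      have hlk : (l : WithTop ℕ∞) < ((k : ℕ∞) : WithTop ℕ∞) := by
        have hlt : l < k := lt_of_lt_of_le (Finset.mem_range.mp hl) hn
        exact_mod_cast hlt
      have h2 : HasDerivAt (iteratedDeriv l g) (iteratedDeriv (l + 1) g s) s := by
        rw [iteratedDeriv_succ]
        exact ((hg.differentiable_iteratedDeriv l hlk) s).hasDerivAt
      exact h2.const_mul (β l)
    have hprod : ∀ θ : ℝ, HasDerivAt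
        (fun θ : ℝ => Complex.exp ((c : ℂ) * (θ : ℂ) * I) *
          ∑ l ∈ Finset.range (n + 1), β l * iteratedDeriv l g (lam * θ))
        (Complex.exp ((c : ℂ) * (θ : ℂ) * I) *
          (((c : ℂ) * I) * (∑ l ∈ Finset.range (n + 1), β l * iteratedDeriv l g (lam * θ))
            + (lam : ℂ) * ∑ l ∈ Finset.range (n + 1), β l * iteratedDeriv (l + 1) g (lam * θ))) θ := by
      intro θ
      have hlin : HasDerivAt (fun θ : ℝ => lam * θ) lam θ := by
        simpa using (hasDerivAt_id θ).const_mul lam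
      have hcomp : HasDerivAt
          (fun θ : ℝ => ∑ l ∈ Finset.range (n + 1), β l * iteratedDeriv l g (lam * θ))
          (lam • ∑ l ∈ Finset.range (n + 1), β l * iteratedDeriv (l + 1) g (lam * θ)) θ := by
        simpa [Function.comp_def] using HasDerivAt.scomp θ (hq (lam * θ)) hlin
      have := (hE θ).fun_mul hcomp
      refine this.congr_deriv ?_
      simp only [Complex.real_smul]
      ring
    refine ⟨fun l => ((c : ℂ) * I) * β l + (lam : ℂ) * (if l = 0 then 0 else β (l - 1)),
      ?_, ?_, ?_⟩
    · intro l hl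
      show ((c : ℂ) * I) * β l + (lam : ℂ) * (if l = 0 then 0 else β (l - 1)) = 0
      rw [hβ0 l (by omega), if_neg (by omega), hβ0 (l - 1) (by omega)]
      ring
    · calc ∑ l ∈ Finset.range (n + 2),
            ‖((c : ℂ) * I) * β l + (lam : ℂ) * (if l = 0 then 0 else β (l - 1))‖
          ≤ ∑ l ∈ Finset.range (n + 2),
            (|c| * ‖β l‖ + |lam| * ‖(if l = 0 then 0 else β (l - 1))‖) := by
            apply Finset.sum_le_sum
            intro l _
            refine (norm_add_le _ _).trans ?_
            rw [norm_mul, norm_mul, norm_mul, Complex.norm_real, Real.norm_eq_abs,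
              Complex.norm_I, mul_one, Complex.norm_real, Real.norm_eq_abs]
        _ = |c| * (∑ l ∈ Finset.range (n + 2), ‖β l‖)
            + |lam| * ∑ l ∈ Finset.range (n + 2), ‖(if l = 0 then 0 else β (l - 1))‖ := by
            rw [Finset.sum_add_distrib, Finset.mul_sum, Finset.mul_sum]
        _ = |c| * (∑ l ∈ Finset.range (n + 1), ‖β l‖)
            + |lam| * ∑ l ∈ Finset.range (n + 1), ‖β l‖ := by
            congr 1
            · rw [Finset.sum_range_succ, hβ0 (n + 1) (Nat.lt_succ_self n), norm_zero, add_zero]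
            · rw [Finset.sum_range_succ' (fun l => ‖(if l = 0 then 0 else β (l - 1))‖) (n + 1)]
              simp
        _ ≤ (|c| + |lam|) * (‖a‖ * (|c| + |lam|) ^ n) := by
            rw [← add_mul]
            exact mul_le_mul_of_nonneg_left hβs (by positivity)
        _ = ‖a‖ * (|c| + |lam|) ^ (n + 1) := by ring
    · intro θ
      rw [iteratedDeriv_succ]
      have hrw : iteratedDeriv n (fun t : ℝ => a * Complex.exp ((c:ℂ) * (t:ℂ) * I) * g (lam * t))
          = fun θ : ℝ => Complex.exp ((c:ℂ) * (θ:ℂ) * I) *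
              ∑ l ∈ Finset.range (n + 1), β l * iteratedDeriv l g (lam * θ) := funext hβf
      rw [hrw, (hprod θ).deriv]
      have e1 : ∑ l ∈ Finset.range (n + 2),
          (((c : ℂ) * I) * β l + (lam : ℂ) * (if l = 0 then 0 else β (l - 1)))
            * iteratedDeriv l g (lam * θ)
          = ((c : ℂ) * I) * (∑ l ∈ Finset.range (n + 1), β l * iteratedDeriv l g (lam * θ))
            + (lam : ℂ) * ∑ l ∈ Finset.range (n + 1), β l * iteratedDeriv (l + 1) g (lam * θ) := by
        simp_rw [add_mul]
        rw [Finset.sum_add_distrib]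
        congr 1
        · rw [Finset.sum_range_succ, hβ0 (n + 1) (Nat.lt_succ_self n), Finset.mul_sum]
          simp [mul_assoc]
        · rw [Finset.sum_range_succ' (fun l => ((lam : ℂ) * (if l = 0 then 0 else β (l - 1)))
            * iteratedDeriv l g (lam * θ)) (n + 1), Finset.mul_sum]
          simp [mul_assoc]
      rw [e1]

end S3
set_option maxHeartbeats 1000000

namespace S3
open Complex Function

lemma Nn_nonneg (k : ℕ) (α : ℝ) (g : ℝ → ℂ) : 0 ≤ Nn k α g :=
  add_nonneg (Finset.sum_nonneg fun j _ => supN_nonneg _) (holderSem_nonneg _ _)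

lemma master (k : ℕ) (α : ℝ) (hα : 0 < α) (hα' : α < 1) (a : ℂ) (c lam : ℝ)
    (g h : ℝ → ℂ) (hg : ContDiff ℝ (k : ℕ∞) g) (hgper : Periodic g (2 * Real.pi))
    (hhper : Periodic h (2 * Real.pi))
    (hgH : ∃ C : NNReal, HolderWith C α.toNNReal (iteratedDeriv k g))
    (hh : ∀ θ : ℝ, h θ = a * Complex.exp (c * θ * I) * g (lam * θ)) :
    ContDiff ℝ (k : ℕ∞) h ∧ (∃ C : NNReal, HolderWith C α.toNNReal (iteratedDeriv k h)) ∧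
    Nn k α h ≤ ((k : ℝ) + 2) * (2 * (Real.pi + 1) * ‖a‖ * ((|c| + |lam|) + 1) ^ (k + 2))
      * Nn k α g := by
  have hfun : h = fun t : ℝ => a * Complex.exp (c * t * I) * g (lam * t) := funext hh
  subst hfun
  set P := |c| + |lam| with hPdef
  have hP0 : 0 ≤ P := by positivity
  have hπ := Real.pi_pos
  have hcont : ∀ l, l ≤ k → Continuous (iteratedDeriv l g) := fun l hl =>
    hg.continuous_iteratedDeriv l (by exact_mod_cast hl)
  have hperl : ∀ l : ℕ, Periodic (iteratedDeriv l g) (2 * Real.pi) := fun l =>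
    periodic_iteratedDeriv hgper l
  have hbound : ∀ l, l ≤ k → ∀ θ, ‖iteratedDeriv l g θ‖ ≤ supN (iteratedDeriv l g) := by
    intro l hl
    obtain ⟨M, _, hM⟩ := bound_of_periodic (hcont l hl) (hperl l)
    exact le_supN hM
  set SM := ∑ j ∈ Finset.range (k + 1), supN (iteratedDeriv j g) with hSMdef
  have hSM0 : 0 ≤ SM := Finset.sum_nonneg fun j _ => supN_nonneg _
  have hsupSM : ∀ l, l ≤ k → ∀ θ, ‖iteratedDeriv l g θ‖ ≤ SM := by
    intro l hl θ
    refine (hbound l hl θ).trans ?_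
    rw [hSMdef]
    exact Finset.single_le_sum (f := fun j => supN (iteratedDeriv j g))
      (fun j _ => supN_nonneg _) (Finset.mem_range.mpr (Nat.lt_succ_of_le hl))
  set Hg := holderSem α (iteratedDeriv k g) with hHgdef
  have hHg0 : 0 ≤ Hg := holderSem_nonneg _ _
  have hNg : Nn k α g = SM + Hg := rfl
  have hchordg : ∀ x y : ℝ, ‖iteratedDeriv k g x - iteratedDeriv k g y‖
      ≤ Hg * ‖(Circle.exp x : ℂ) - Circle.exp y‖ ^ α := by
    apply chordal_of_holderSem (hperl k)
    obtain ⟨C0, hC0⟩ := hgH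
    exact ⟨2 * C0, by positivity,
      chordal_of_dist hα hα' C0.2 (hperl k) (dist_of_holderWith hα.le hC0)⟩
  have hcd : ContDiff ℝ (k : ℕ∞) (fun t : ℝ => a * Complex.exp (c * t * I) * g (lam * t)) := by
    apply ContDiff.mul
    · apply ContDiff.mul contDiff_const
      have h1 : ContDiff ℝ (k : ℕ∞) (fun t : ℝ => (c : ℂ) * (t : ℂ) * I) :=
        ContDiff.mul (contDiff_const.mul Complex.ofRealCLM.contDiff) contDiff_const
      exact Complex.contDiff_exp.comp h1
    · exact hg.comp (contDiff_const.mul contDiff_id)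
  have hsup : ∀ n, n ≤ k → ∀ θ : ℝ,
      ‖iteratedDeriv n (fun t : ℝ => a * Complex.exp (c * t * I) * g (lam * t)) θ‖
        ≤ ‖a‖ * P ^ n * SM := by
    intro n hn θ
    obtain ⟨β, hβ0, hβs, hβf⟩ := key k a c lam hg n hn
    rw [hβf θ, norm_mul]
    have hE1 : ‖Complex.exp ((c : ℂ) * (θ : ℂ) * I)‖ = 1 := by
      rw [show ((c : ℂ) * (θ : ℂ) * I) = ((c * θ : ℝ) : ℂ) * I by push_cast; ring]
      rw [Complex.norm_exp_ofReal_mul_I]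
    rw [hE1, one_mul]
    calc ‖∑ l ∈ Finset.range (n + 1), β l * iteratedDeriv l g (lam * θ)‖
        ≤ ∑ l ∈ Finset.range (n + 1), ‖β l‖ * ‖iteratedDeriv l g (lam * θ)‖ := by
          refine (norm_sum_le _ _).trans (le_of_eq ?_)
          exact Finset.sum_congr rfl fun l _ => norm_mul _ _
      _ ≤ ∑ l ∈ Finset.range (n + 1), ‖β l‖ * SM := Finset.sum_le_sum fun l hl =>
          mul_le_mul_of_nonneg_left
            (hsupSM l (by have := Finset.mem_range.mp hl; omega) _) (norm_nonneg _)
      _ = (∑ l ∈ Finset.range (n + 1), ‖β l‖) * SM := by rw [Finset.sum_mul]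
      _ ≤ (‖a‖ * P ^ n) * SM := mul_le_mul_of_nonneg_right hβs hSM0
      _ = ‖a‖ * P ^ n * SM := by ring
  set CB := 2 * (Real.pi + 1) * ‖a‖ * (P + 1) ^ (k + 2) * (SM + Hg) with hCBdef
  have hCB0 : 0 ≤ CB := by
    rw [hCBdef]
    have : (0:ℝ) ≤ SM + Hg := by linarith
    positivity
  have hchordh : ∀ x y : ℝ,
      ‖iteratedDeriv k (fun t : ℝ => a * Complex.exp (c * t * I) * g (lam * t)) x
        - iteratedDeriv k (fun t : ℝ => a * Complex.exp (c * t * I) * g (lam * t)) y‖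
      ≤ CB * ‖(Circle.exp x : ℂ) - Circle.exp y‖ ^ α := by
    intro x y
    obtain ⟨β, hβ0, hβs, hβf⟩ := key k a c lam hg k le_rfl
    set nn : ℤ := round ((x - y) / (2 * Real.pi)) with hnn
    set y' : ℝ := y + nn * (2 * Real.pi) with hy'
    have hgy : iteratedDeriv k (fun t : ℝ => a * Complex.exp (c * t * I) * g (lam * t)) y'
        = iteratedDeriv k (fun t : ℝ => a * Complex.exp (c * t * I) * g (lam * t)) y :=
      ((periodic_iteratedDeriv hhper k).int_mul nn) y
    have hexp : Circle.exp y' = Circle.exp y := Circle.exp_eq_exp.mpr ⟨nn, by rw [hy']⟩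
    have hΔ : |x - y'| ≤ Real.pi := by
      have h1 := abs_sub_round ((x - y) / (2 * Real.pi))
      have h2 : x - y' = (2 * Real.pi) * ((x - y) / (2 * Real.pi) - nn) := by
        rw [hy']; field_simp; ring
      rw [h2, abs_mul, abs_of_pos (by positivity)]
      nlinarith [h1]
    have hΔ0 : (0:ℝ) ≤ |x - y'| ^ α := Real.rpow_nonneg (abs_nonneg _) α
    have hΔch : |x - y'| ^ α ≤ 2 * ‖(Circle.exp x : ℂ) - Circle.exp y'‖ ^ α := by
      have h3 : |x - y'| ≤ Real.pi / 2 * ‖(Circle.exp x : ℂ) - Circle.exp y'‖ := by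
        have h4 := chord_ge x y' hΔ
        calc |x - y'| = (Real.pi / 2) * (2 / Real.pi * |x - y'|) := by field_simp
          _ ≤ (Real.pi / 2) * ‖(Circle.exp x : ℂ) - Circle.exp y'‖ :=
            mul_le_mul_of_nonneg_left h4 (by positivity)
      calc |x - y'| ^ α ≤ (Real.pi / 2 * ‖(Circle.exp x : ℂ) - Circle.exp y'‖) ^ α :=
            Real.rpow_le_rpow (abs_nonneg _) h3 hα.le
        _ = (Real.pi / 2) ^ α * ‖(Circle.exp x : ℂ) - Circle.exp y'‖ ^ α :=
            Real.mul_rpow (by positivity) (norm_nonneg _)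
        _ ≤ 2 * ‖(Circle.exp x : ℂ) - Circle.exp y'‖ ^ α := by
            apply mul_le_mul_of_nonneg_right _ (Real.rpow_nonneg (norm_nonneg _) α)
            calc (Real.pi / 2 : ℝ) ^ α ≤ (Real.pi / 2) ^ (1 : ℝ) :=
                  Real.rpow_le_rpow_of_exponent_le (by nlinarith [Real.pi_gt_three]) hα'.le
              _ = Real.pi / 2 := Real.rpow_one _
              _ ≤ 2 := by nlinarith [Real.pi_le_four]
    -- per-term Hölder estimates
    have hkey : ∀ l, l ≤ k →
        ‖iteratedDeriv l g (lam * x) - iteratedDeriv l g (lam * y')‖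
          ≤ (SM * (|lam| * Real.pi) + Hg * (1 + |lam|)) * |x - y'| ^ α := by
      intro l hl
      rcases eq_or_lt_of_le hl with rfl | hlt
      · calc ‖iteratedDeriv l g (lam * x) - iteratedDeriv l g (lam * y')‖
            ≤ Hg * ‖(Circle.exp (lam * x) : ℂ) - Circle.exp (lam * y')‖ ^ α := hchordg _ _
          _ ≤ Hg * |lam * x - lam * y'| ^ α := mul_le_mul_of_nonneg_left
              (Real.rpow_le_rpow (norm_nonneg _) (chord_le _ _) hα.le) hHg0
          _ = Hg * (|lam| * |x - y'|) ^ α := by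
              rw [show lam * x - lam * y' = lam * (x - y') by ring, abs_mul]
          _ = Hg * (|lam| ^ α * |x - y'| ^ α) := by
              rw [Real.mul_rpow (abs_nonneg _) (abs_nonneg _)]
          _ ≤ Hg * ((1 + |lam|) * |x - y'| ^ α) := by
              apply mul_le_mul_of_nonneg_left _ hHg0
              exact mul_le_mul_of_nonneg_right
                (rpow_le_one_add (abs_nonneg _) hα hα'.le) hΔ0
          _ ≤ (SM * (|lam| * Real.pi) + Hg * (1 + |lam|)) * |x - y'| ^ α := by
              have h5 : (0:ℝ) ≤ SM * (|lam| * Real.pi) := by positivity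
              nlinarith [mul_nonneg h5 hΔ0]
      · have hdiff : ∀ s : ℝ, DifferentiableAt ℝ (iteratedDeriv l g) s := fun s =>
          (hg.differentiable_iteratedDeriv l (by exact_mod_cast hlt)) s
        have hd : ∀ s : ℝ, ‖deriv (iteratedDeriv l g) s‖ ≤ SM := by
          intro s
          rw [← iteratedDeriv_succ]
          exact hsupSM (l + 1) hlt s
        have hmvt := Convex.norm_image_sub_le_of_norm_deriv_le (fun s _ => hdiff s)
          (fun s _ => hd s) convex_univ (Set.mem_univ (lam * y')) (Set.mem_univ (lam * x))
        calc ‖iteratedDeriv l g (lam * x) - iteratedDeriv l g (lam * y')‖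
            ≤ SM * ‖lam * x - lam * y'‖ := hmvt
          _ = SM * (|lam| * |x - y'|) := by
              rw [show lam * x - lam * y' = lam * (x - y') by ring, Real.norm_eq_abs, abs_mul]
          _ ≤ SM * (|lam| * (Real.pi * |x - y'| ^ α)) := by
              apply mul_le_mul_of_nonneg_left _ hSM0
              exact mul_le_mul_of_nonneg_left (le_pi_rpow hα hα'.le (abs_nonneg _) hΔ)
                (abs_nonneg _)
          _ = (SM * (|lam| * Real.pi)) * |x - y'| ^ α := by ring
          _ ≤ (SM * (|lam| * Real.pi) + Hg * (1 + |lam|)) * |x - y'| ^ α := by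
              have h5 : (0:ℝ) ≤ Hg * (1 + |lam|) := by positivity
              nlinarith [mul_nonneg h5 hΔ0]
    -- difference of exponentials
    have hEd : ‖Complex.exp ((c : ℂ) * (x : ℂ) * I) - Complex.exp ((c : ℂ) * (y' : ℂ) * I)‖
        ≤ |c| * |x - y'| := by
      have e1 : ((c : ℂ) * (x : ℂ) * I) = ((c * x : ℝ) : ℂ) * I := by push_cast; ring
      have e2 : ((c : ℂ) * (y' : ℂ) * I) = ((c * y' : ℝ) : ℂ) * I := by push_cast; ring
      rw [e1, e2, norm_exp_sub_exp_le]
      have h6 := Real.abs_sin_le_abs (x := (c * x - c * y') / 2)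
      calc 2 * |Real.sin ((c * x - c * y') / 2)| ≤ 2 * |(c * x - c * y') / 2| := by linarith
        _ = |c * x - c * y'| := by rw [abs_div, show |(2:ℝ)| = 2 by norm_num]; ring
        _ = |c| * |x - y'| := by rw [show c * x - c * y' = c * (x - y') by ring, abs_mul]
    -- norm of the Q-part at y'
    have hQ : ∀ t : ℝ, ‖∑ l ∈ Finset.range (k + 1), β l * iteratedDeriv l g (lam * t)‖
        ≤ ‖a‖ * P ^ k * SM := by
      intro t
      calc ‖∑ l ∈ Finset.range (k + 1), β l * iteratedDeriv l g (lam * t)‖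
          ≤ ∑ l ∈ Finset.range (k + 1), ‖β l‖ * ‖iteratedDeriv l g (lam * t)‖ := by
            refine (norm_sum_le _ _).trans (le_of_eq ?_)
            exact Finset.sum_congr rfl fun l _ => norm_mul _ _
        _ ≤ ∑ l ∈ Finset.range (k + 1), ‖β l‖ * SM := Finset.sum_le_sum fun l hl =>
            mul_le_mul_of_nonneg_left
              (hsupSM l (by have := Finset.mem_range.mp hl; omega) _) (norm_nonneg _)
        _ = (∑ l ∈ Finset.range (k + 1), ‖β l‖) * SM := by rw [Finset.sum_mul]
        _ ≤ (‖a‖ * P ^ k) * SM := mul_le_mul_of_nonneg_right hβs hSM0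
        _ = ‖a‖ * P ^ k * SM := by ring
    -- difference of the Q-parts
    have hQd : ‖(∑ l ∈ Finset.range (k + 1), β l * iteratedDeriv l g (lam * x))
        - ∑ l ∈ Finset.range (k + 1), β l * iteratedDeriv l g (lam * y')‖
        ≤ (‖a‖ * P ^ k) * ((SM * (|lam| * Real.pi) + Hg * (1 + |lam|)) * |x - y'| ^ α) := by
      have e3 : (∑ l ∈ Finset.range (k + 1), β l * iteratedDeriv l g (lam * x))
          - ∑ l ∈ Finset.range (k + 1), β l * iteratedDeriv l g (lam * y')
          = ∑ l ∈ Finset.range (k + 1),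
              β l * (iteratedDeriv l g (lam * x) - iteratedDeriv l g (lam * y')) := by
        rw [← Finset.sum_sub_distrib]
        exact Finset.sum_congr rfl fun l _ => (mul_sub _ _ _).symm
      rw [e3]
      have hU0 : (0:ℝ) ≤ (SM * (|lam| * Real.pi) + Hg * (1 + |lam|)) * |x - y'| ^ α := by
        apply mul_nonneg _ hΔ0
        positivity
      calc ‖∑ l ∈ Finset.range (k + 1),
              β l * (iteratedDeriv l g (lam * x) - iteratedDeriv l g (lam * y'))‖
          ≤ ∑ l ∈ Finset.range (k + 1),
              ‖β l‖ * ‖iteratedDeriv l g (lam * x) - iteratedDeriv l g (lam * y')‖ := by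
            refine (norm_sum_le _ _).trans (le_of_eq ?_)
            exact Finset.sum_congr rfl fun l _ => norm_mul _ _
        _ ≤ ∑ l ∈ Finset.range (k + 1),
              ‖β l‖ * ((SM * (|lam| * Real.pi) + Hg * (1 + |lam|)) * |x - y'| ^ α) :=
            Finset.sum_le_sum fun l hl => mul_le_mul_of_nonneg_left
              (hkey l (by have := Finset.mem_range.mp hl; omega)) (norm_nonneg _)
        _ = (∑ l ∈ Finset.range (k + 1), ‖β l‖)
              * ((SM * (|lam| * Real.pi) + Hg * (1 + |lam|)) * |x - y'| ^ α) :=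
            (Finset.sum_mul _ _ _).symm
        _ ≤ (‖a‖ * P ^ k) * ((SM * (|lam| * Real.pi) + Hg * (1 + |lam|)) * |x - y'| ^ α) :=
            mul_le_mul_of_nonneg_right hβs hU0
    -- assemble
    have hsplit : iteratedDeriv k (fun t : ℝ => a * Complex.exp (c * t * I) * g (lam * t)) x
        - iteratedDeriv k (fun t : ℝ => a * Complex.exp (c * t * I) * g (lam * t)) y'
        = Complex.exp ((c : ℂ) * (x : ℂ) * I)
            * ((∑ l ∈ Finset.range (k + 1), β l * iteratedDeriv l g (lam * x))
              - ∑ l ∈ Finset.range (k + 1), β l * iteratedDeriv l g (lam * y'))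
          + (Complex.exp ((c : ℂ) * (x : ℂ) * I) - Complex.exp ((c : ℂ) * (y' : ℂ) * I))
            * ∑ l ∈ Finset.range (k + 1), β l * iteratedDeriv l g (lam * y') := by
      rw [hβf x, hβf y']
      ring
    have hE1 : ‖Complex.exp ((c : ℂ) * (x : ℂ) * I)‖ = 1 := by
      rw [show ((c : ℂ) * (x : ℂ) * I) = ((c * x : ℝ) : ℂ) * I by push_cast; ring]
      rw [Complex.norm_exp_ofReal_mul_I]
    have h7 : P ^ k ≤ (P + 1) ^ (k + 1) :=
      (pow_le_pow_left₀ hP0 (by linarith) k).trans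
        (pow_le_pow_right₀ (by linarith) (Nat.le_succ k))
    calc ‖iteratedDeriv k (fun t : ℝ => a * Complex.exp (c * t * I) * g (lam * t)) x
          - iteratedDeriv k (fun t : ℝ => a * Complex.exp (c * t * I) * g (lam * t)) y‖
        = ‖iteratedDeriv k (fun t : ℝ => a * Complex.exp (c * t * I) * g (lam * t)) x
          - iteratedDeriv k (fun t : ℝ => a * Complex.exp (c * t * I) * g (lam * t)) y'‖ := by
          rw [hgy]
      _ ≤ ‖Complex.exp ((c : ℂ) * (x : ℂ) * I)‖
            * ‖(∑ l ∈ Finset.range (k + 1), β l * iteratedDeriv l g (lam * x))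
              - ∑ l ∈ Finset.range (k + 1), β l * iteratedDeriv l g (lam * y')‖
          + ‖Complex.exp ((c : ℂ) * (x : ℂ) * I) - Complex.exp ((c : ℂ) * (y' : ℂ) * I)‖
            * ‖∑ l ∈ Finset.range (k + 1), β l * iteratedDeriv l g (lam * y')‖ := by
          rw [hsplit]
          refine (norm_add_le _ _).trans (le_of_eq ?_)
          rw [norm_mul, norm_mul]
      _ ≤ 1 * ((‖a‖ * P ^ k) * ((SM * (|lam| * Real.pi) + Hg * (1 + |lam|)) * |x - y'| ^ α))
          + (|c| * |x - y'|) * (‖a‖ * P ^ k * SM) := by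
          rw [hE1]
          refine add_le_add (mul_le_mul_of_nonneg_left hQd (by norm_num)) ?_
          refine mul_le_mul hEd (hQ y') (norm_nonneg _) ?_
          positivity
      _ ≤ 1 * ((‖a‖ * P ^ k) * ((SM * (|lam| * Real.pi) + Hg * (1 + |lam|)) * |x - y'| ^ α))
          + (|c| * (Real.pi * |x - y'| ^ α)) * (‖a‖ * P ^ k * SM) := by
          have h8 := le_pi_rpow hα hα'.le (abs_nonneg (x - y')) hΔ
          have h9 : (0:ℝ) ≤ ‖a‖ * P ^ k * SM := by positivity
          have h10 : |c| * |x - y'| ≤ |c| * (Real.pi * |x - y'| ^ α) :=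
            mul_le_mul_of_nonneg_left h8 (abs_nonneg c)
          nlinarith [mul_le_mul_of_nonneg_right h10 h9]
      _ = ‖a‖ * P ^ k * (SM * (|lam| * Real.pi) + Hg * (1 + |lam|) + |c| * Real.pi * SM)
            * |x - y'| ^ α := by ring
      _ ≤ ‖a‖ * (P + 1) ^ (k + 1) * ((Real.pi + 1) * (P + 1) * (SM + Hg)) * |x - y'| ^ α := by
          apply mul_le_mul_of_nonneg_right _ hΔ0
          have hc1 : |c| ≤ P := by rw [hPdef]; nlinarith [abs_nonneg lam]
          have hl1 : |lam| ≤ P := by rw [hPdef]; nlinarith [abs_nonneg c]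
          have h11 : SM * (|lam| * Real.pi) + Hg * (1 + |lam|) + |c| * Real.pi * SM
              ≤ (Real.pi + 1) * (P + 1) * (SM + Hg) := by
            nlinarith [mul_le_mul_of_nonneg_left (show |lam| * Real.pi + |c| * Real.pi
                ≤ (Real.pi + 1) * (P + 1) by nlinarith) hSM0,
              mul_le_mul_of_nonneg_left (show 1 + |lam| ≤ (Real.pi + 1) * (P + 1) by nlinarith)
                hHg0]
          have h12 : (0:ℝ) ≤ SM * (|lam| * Real.pi) + Hg * (1 + |lam|) + |c| * Real.pi * SM := by
            positivity
          have h13 : (0:ℝ) ≤ (Real.pi + 1) * (P + 1) * (SM + Hg) := by positivity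
          calc ‖a‖ * P ^ k * (SM * (|lam| * Real.pi) + Hg * (1 + |lam|) + |c| * Real.pi * SM)
              ≤ ‖a‖ * (P + 1) ^ (k + 1)
                  * (SM * (|lam| * Real.pi) + Hg * (1 + |lam|) + |c| * Real.pi * SM) := by
                apply mul_le_mul_of_nonneg_right _ h12
                exact mul_le_mul_of_nonneg_left h7 (norm_nonneg a)
            _ ≤ ‖a‖ * (P + 1) ^ (k + 1) * ((Real.pi + 1) * (P + 1) * (SM + Hg)) := by
                apply mul_le_mul_of_nonneg_left h11 (by positivity)
      _ ≤ ‖a‖ * (P + 1) ^ (k + 1) * ((Real.pi + 1) * (P + 1) * (SM + Hg))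
            * (2 * ‖(Circle.exp x : ℂ) - Circle.exp y'‖ ^ α) := by
          apply mul_le_mul_of_nonneg_left hΔch
          positivity
      _ = CB * ‖(Circle.exp x : ℂ) - Circle.exp y'‖ ^ α := by
          rw [hCBdef]; ring
      _ = CB * ‖(Circle.exp x : ℂ) - Circle.exp y‖ ^ α := by rw [hexp]
  refine ⟨hcd, ⟨CB.toNNReal, ?_⟩, ?_⟩
  · apply holderWith_of_dist hCB0 hα.le
    intro x y
    exact (hchordh x y).trans (mul_le_mul_of_nonneg_left
      (Real.rpow_le_rpow (norm_nonneg _) (chord_le x y) hα.le) hCB0)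
  · have h6 : ∀ j ∈ Finset.range (k + 1),
        supN (iteratedDeriv j (fun t : ℝ => a * Complex.exp (c * t * I) * g (lam * t)))
          ≤ 2 * (Real.pi + 1) * ‖a‖ * (P + 1) ^ (k + 2) * (SM + Hg) := by
      intro j hj
      have hjk : j ≤ k := by have := Finset.mem_range.mp hj; omega
      have hSH0 : (0:ℝ) ≤ SM + Hg := by linarith
      apply supN_le (by positivity)
      intro θ
      refine (hsup j hjk θ).trans ?_
      have h7 : P ^ j ≤ (P + 1) ^ (k + 2) :=
        (pow_le_pow_left₀ hP0 (by linarith) j).trans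
          (pow_le_pow_right₀ (by linarith) (by omega))
      calc ‖a‖ * P ^ j * SM ≤ ‖a‖ * (P + 1) ^ (k + 2) * (SM + Hg) := by
            apply mul_le_mul (mul_le_mul_of_nonneg_left h7 (norm_nonneg a))
              (by linarith) hSM0 (by positivity)
        _ ≤ 2 * (Real.pi + 1) * (‖a‖ * (P + 1) ^ (k + 2) * (SM + Hg)) := by
            nlinarith [mul_nonneg (mul_nonneg (norm_nonneg a)
              (pow_nonneg (by linarith : (0:ℝ) ≤ P + 1) (k + 2))) hSH0]
        _ = 2 * (Real.pi + 1) * ‖a‖ * (P + 1) ^ (k + 2) * (SM + Hg) := by ring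
    have h8 : holderSem α (iteratedDeriv k
        (fun t : ℝ => a * Complex.exp (c * t * I) * g (lam * t))) ≤ CB :=
      holderSem_le hCB0 hchordh
    calc Nn k α (fun t : ℝ => a * Complex.exp (c * t * I) * g (lam * t))
        ≤ (∑ _j ∈ Finset.range (k + 1),
            2 * (Real.pi + 1) * ‖a‖ * (P + 1) ^ (k + 2) * (SM + Hg)) + CB :=
          add_le_add (Finset.sum_le_sum h6) h8
      _ = ((k : ℝ) + 1) * (2 * (Real.pi + 1) * ‖a‖ * (P + 1) ^ (k + 2) * (SM + Hg)) + CB := by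
          rw [Finset.sum_const, Finset.card_range, nsmul_eq_mul]
          push_cast
          ring
      _ = ((k : ℝ) + 2) * (2 * (Real.pi + 1) * ‖a‖ * (P + 1) ^ (k + 2)) * (SM + Hg) := by
          rw [hCBdef]; ring
      _ = ((k : ℝ) + 2) * (2 * (Real.pi + 1) * ‖a‖ * (P + 1) ^ (k + 2)) * Nn k α g := by
          rw [hNg]

end S3
namespace S3
open Complex Function

noncomputable def reC : ℂ →L[ℝ] ℂ := Complex.ofRealCLM.comp Complex.reCLM
noncomputable def imC : ℂ →L[ℝ] ℂ := Complex.ofRealCLM.comp Complex.imCLM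

lemma reC_apply (z : ℂ) : reC z = (z.re : ℂ) := rfl
lemma imC_apply (z : ℂ) : imC z = (z.im : ℂ) := rfl

lemma norm_reC (z : ℂ) : ‖reC z‖ ≤ ‖z‖ := by
  rw [reC_apply, Complex.norm_real]
  exact Complex.abs_re_le_norm z
lemma norm_imC (z : ℂ) : ‖imC z‖ ≤ ‖z‖ := by
  rw [imC_apply, Complex.norm_real]
  exact Complex.abs_im_le_norm z
lemma norm_le_reC_imC (z : ℂ) : ‖z‖ ≤ ‖reC z‖ + ‖imC z‖ := by
  rw [reC_apply, imC_apply, Complex.norm_real, Complex.norm_real]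
  exact Complex.norm_le_abs_re_add_abs_im z

lemma le_supN' {g : ℝ → ℂ} (hc : Continuous g) (hp : Periodic g (2 * Real.pi)) (θ : ℝ) :
    ‖g θ‖ ≤ supN g := by
  obtain ⟨M, _, hM⟩ := bound_of_periodic hc hp
  exact le_supN hM θ

lemma chordal_self {α : ℝ} (hα : 0 < α) (hα' : α < 1) {g : ℝ → ℂ}
    (hper : Periodic g (2 * Real.pi)) (hH : ∃ C : NNReal, HolderWith C α.toNNReal g)
    (x y : ℝ) : ‖g x - g y‖ ≤ holderSem α g * ‖(Circle.exp x : ℂ) - Circle.exp y‖ ^ α := by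
  apply chordal_of_holderSem hper
  obtain ⟨C0, hC0⟩ := hH
  exact ⟨2 * C0, by positivity, chordal_of_dist hα hα' C0.2 hper (dist_of_holderWith hα.le hC0)⟩

lemma holderWith_clm (R : ℂ →L[ℝ] ℂ) (hR : ∀ z, ‖R z‖ ≤ ‖z‖) {f : ℝ → ℂ} {α : ℝ}
    (hα : 0 < α) (hH : ∃ C : NNReal, HolderWith C α.toNNReal f) :
    ∃ C : NNReal, HolderWith C α.toNNReal (fun t => R (f t)) := by
  obtain ⟨C0, hC0⟩ := hH
  refine ⟨((C0 : ℝ)).toNNReal, holderWith_of_dist C0.2 hα.le fun x y => ?_⟩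
  calc ‖R (f x) - R (f y)‖ = ‖R (f x - f y)‖ := by rw [map_sub]
    _ ≤ ‖f x - f y‖ := hR _
    _ ≤ C0 * |x - y| ^ α := dist_of_holderWith hα.le hC0 x y

lemma iteratedDeriv_clm {k : ℕ} (R : ℂ →L[ℝ] ℂ) {g : ℝ → ℂ} (hg : ContDiff ℝ (k : ℕ∞) g) :
    ∀ n, n ≤ k → ∀ θ, iteratedDeriv n (fun t => R (g t)) θ = R (iteratedDeriv n g θ) := by
  intro n
  induction n with
  | zero => intro _ θ; rw [iteratedDeriv_zero, iteratedDeriv_zero]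
  | succ n ih =>
    intro hn θ
    rw [iteratedDeriv_succ, iteratedDeriv_succ]
    have hfn : iteratedDeriv n (fun t => R (g t)) = fun t => R (iteratedDeriv n g t) :=
      funext (ih (Nat.le_of_succ_le hn))
    rw [hfn]
    have hdiff : DifferentiableAt ℝ (iteratedDeriv n g) θ :=
      (hg.differentiable_iteratedDeriv n
        (by exact_mod_cast Nat.lt_of_succ_le hn : (n : WithTop ℕ∞) < ((k : ℕ∞) : WithTop ℕ∞))) θ
    exact (R.hasFDerivAt.comp_hasDerivAt θ hdiff.hasDerivAt).deriv

lemma contDiff_clm {k : ℕ} (R : ℂ →L[ℝ] ℂ) {g : ℝ → ℂ} (hg : ContDiff ℝ (k : ℕ∞) g) :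
    ContDiff ℝ (k : ℕ∞) (fun t => R (g t)) := R.contDiff.comp hg

lemma Nn_clm_le (k : ℕ) {α : ℝ} (hα : 0 < α) (hα' : α < 1) (R : ℂ →L[ℝ] ℂ)
    (hR : ∀ z, ‖R z‖ ≤ ‖z‖) {g : ℝ → ℂ} (hg : ContDiff ℝ (k : ℕ∞) g)
    (hper : Periodic g (2 * Real.pi))
    (hH : ∃ C : NNReal, HolderWith C α.toNNReal (iteratedDeriv k g)) :
    Nn k α (fun t => R (g t)) ≤ Nn k α g := by
  unfold Nn
  apply add_le_add
  · apply Finset.sum_le_sum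
    intro j hj
    have hjk : j ≤ k := by have := Finset.mem_range.mp hj; omega
    apply supN_le (supN_nonneg _)
    intro θ
    rw [iteratedDeriv_clm R hg j hjk θ]
    refine (hR _).trans ?_
    exact le_supN' (hg.continuous_iteratedDeriv j (by exact_mod_cast hjk))
      (periodic_iteratedDeriv hper j) θ
  · apply holderSem_le (holderSem_nonneg _ _)
    intro x y
    rw [iteratedDeriv_clm R hg k le_rfl x, iteratedDeriv_clm R hg k le_rfl y]
    calc ‖R (iteratedDeriv k g x) - R (iteratedDeriv k g y)‖
        = ‖R (iteratedDeriv k g x - iteratedDeriv k g y)‖ := by rw [map_sub]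
      _ ≤ ‖iteratedDeriv k g x - iteratedDeriv k g y‖ := hR _
      _ ≤ holderSem α (iteratedDeriv k g) * ‖(Circle.exp x : ℂ) - Circle.exp y‖ ^ α :=
          chordal_self hα hα' (periodic_iteratedDeriv hper k) hH x y

lemma Nn_le_re_add_im (k : ℕ) {α : ℝ} (hα : 0 < α) (hα' : α < 1) {g : ℝ → ℂ}
    (hg : ContDiff ℝ (k : ℕ∞) g) (hper : Periodic g (2 * Real.pi))
    (hH : ∃ C : NNReal, HolderWith C α.toNNReal (iteratedDeriv k g)) :
    Nn k α g ≤ Nn k α (fun t => reC (g t)) + Nn k α (fun t => imC (g t)) := by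
  have hcontk : ∀ j, j ≤ k → Continuous (iteratedDeriv j g) := fun j hj =>
    hg.continuous_iteratedDeriv j (by exact_mod_cast hj)
  have hRper : ∀ (R : ℂ →L[ℝ] ℂ) (j : ℕ),
      Periodic (fun t => R (iteratedDeriv j g t)) (2 * Real.pi) := by
    intro R j t
    simp only [periodic_iteratedDeriv hper j t]
  unfold Nn
  have h1 : ∀ j, j ≤ k → supN (iteratedDeriv j g)
      ≤ supN (iteratedDeriv j (fun t => reC (g t)))
        + supN (iteratedDeriv j (fun t => imC (g t))) := by
    intro j hj
    apply supN_le (add_nonneg (supN_nonneg _) (supN_nonneg _))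
    intro θ
    refine (norm_le_reC_imC _).trans (add_le_add ?_ ?_)
    · have he : iteratedDeriv j (fun t => reC (g t)) = fun t => reC (iteratedDeriv j g t) :=
        funext fun t => iteratedDeriv_clm reC hg j hj t
      rw [he]
      exact le_supN' (reC.continuous.comp (hcontk j hj)) (hRper reC j) θ
    · have he : iteratedDeriv j (fun t => imC (g t)) = fun t => imC (iteratedDeriv j g t) :=
        funext fun t => iteratedDeriv_clm imC hg j hj t
      rw [he]
      exact le_supN' (imC.continuous.comp (hcontk j hj)) (hRper imC j) θ
  have h2 : holderSem α (iteratedDeriv k g)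
      ≤ holderSem α (iteratedDeriv k (fun t => reC (g t)))
        + holderSem α (iteratedDeriv k (fun t => imC (g t))) := by
    apply holderSem_le (add_nonneg (holderSem_nonneg _ _) (holderSem_nonneg _ _))
    intro x y
    have hRper' : ∀ (R : ℂ →L[ℝ] ℂ), Periodic (iteratedDeriv k (fun t => R (g t)))
        (2 * Real.pi) := fun R =>
      periodic_iteratedDeriv (fun t => by simp only [hper t]) k
    have hRH : ∀ (R : ℂ →L[ℝ] ℂ), (∀ z, ‖R z‖ ≤ ‖z‖) →
        ∃ C : NNReal, HolderWith C α.toNNReal (iteratedDeriv k (fun t => R (g t))) := by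
      intro R hR
      have := holderWith_clm R hR hα hH
      obtain ⟨C0, hC0⟩ := this
      refine ⟨C0, ?_⟩
      have he : (fun t => R (iteratedDeriv k g t)) = iteratedDeriv k (fun t => R (g t)) :=
        funext fun t => (iteratedDeriv_clm R hg k le_rfl t).symm
      rwa [he] at hC0
    have hre := chordal_self hα hα' (hRper' reC) (hRH reC norm_reC) x y
    have him := chordal_self hα hα' (hRper' imC) (hRH imC norm_imC) x y
    calc ‖iteratedDeriv k g x - iteratedDeriv k g y‖
        ≤ ‖reC (iteratedDeriv k g x - iteratedDeriv k g y)‖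
          + ‖imC (iteratedDeriv k g x - iteratedDeriv k g y)‖ := norm_le_reC_imC _
      _ = ‖iteratedDeriv k (fun t => reC (g t)) x - iteratedDeriv k (fun t => reC (g t)) y‖
          + ‖iteratedDeriv k (fun t => imC (g t)) x - iteratedDeriv k (fun t => imC (g t)) y‖ := by
          rw [map_sub, map_sub, iteratedDeriv_clm reC hg k le_rfl,
            iteratedDeriv_clm reC hg k le_rfl, iteratedDeriv_clm imC hg k le_rfl,
            iteratedDeriv_clm imC hg k le_rfl]
      _ ≤ (holderSem α (iteratedDeriv k (fun t => reC (g t)))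
            + holderSem α (iteratedDeriv k (fun t => imC (g t))))
          * ‖(Circle.exp x : ℂ) - Circle.exp y‖ ^ α := by
          rw [add_mul]
          exact add_le_add hre him
  have h3 : ∑ j ∈ Finset.range (k + 1), supN (iteratedDeriv j g)
      ≤ ∑ j ∈ Finset.range (k + 1), (supN (iteratedDeriv j fun t => reC (g t))
        + supN (iteratedDeriv j fun t => imC (g t))) :=
    Finset.sum_le_sum fun j hj => h1 j (by have := Finset.mem_range.mp hj; omega)
  rw [Finset.sum_add_distrib] at h3
  linarith

end S3
namespace S3
open Complex Function

lemma circle_coe_sq (z : Circle) : ((z ^ 2 : Circle) : ℂ) = (z : ℂ) ^ 2 := by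
  rw [pow_two, pow_two, Circle.coe_mul]

lemma negCircle_coe (z : Circle) : ((negCircle z : Circle) : ℂ) = -(z : ℂ) := rfl

noncomputable def sqrtC (z : Circle) : Circle := Circle.exp ((z : ℂ).arg / 2)

lemma sqrtC_sq (z : Circle) : (sqrtC z) ^ 2 = z := by
  apply Subtype.coe_injective
  show ((sqrtC z ^ 2 : Circle) : ℂ) = (z : ℂ)
  rw [circle_coe_sq]
  show (Circle.exp ((z : ℂ).arg / 2) : ℂ) ^ 2 = (z : ℂ)
  rw [Circle.coe_exp]
  have h1 : Complex.exp ((((z:ℂ).arg / 2 : ℝ) : ℂ) * I) ^ 2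
      = Complex.exp ((((z:ℂ).arg : ℝ) : ℂ) * I) := by
    rw [pow_two, ← Complex.exp_add]
    congr 1
    push_cast
    ring
  rw [h1]
  have h2 := Complex.norm_mul_exp_arg_mul_I (z : ℂ)
  rw [Circle.norm_coe, Complex.ofReal_one, one_mul] at h2
  exact h2

lemma exp_sq (θ : ℝ) : (Circle.exp θ) ^ 2 = Circle.exp (2 * θ) := by
  rw [pow_two, ← Circle.exp_add]
  congr 1
  ring

lemma sq_eq_cases {w ξ : Circle} (h : (w : ℂ) ^ 2 = (ξ : ℂ) ^ 2) : w = ξ ∨ w = negCircle ξ := by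
  have h0 : ((w : ℂ) - ξ) * ((w : ℂ) + ξ) = 0 := by
    have h1 : (w : ℂ) ^ 2 - (ξ : ℂ) ^ 2 = 0 := sub_eq_zero.mpr h
    calc ((w : ℂ) - ξ) * ((w : ℂ) + ξ) = (w : ℂ) ^ 2 - (ξ : ℂ) ^ 2 := by ring
      _ = 0 := h1
  rcases mul_eq_zero.mp h0 with h2 | h2
  · exact Or.inl (Subtype.coe_injective (sub_eq_zero.mp h2))
  · refine Or.inr (Subtype.coe_injective ?_)
    show (w : ℂ) = ((negCircle ξ : Circle) : ℂ)
    rw [negCircle_coe]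
    exact add_eq_zero_iff_eq_neg.mp h2

lemma rm_rel {k : ℕ} {α : ℝ} {m : ℕ} (hm : Odd m) {v : Circle → ℂ}
    (hv : v ∈ Rm k α (m : ℤ)) (z : Circle) :
    (starRingEnd ℂ) (v z) = -((z : ℂ) ^ m) * v z := by
  have h := hv.2 z
  have h1 : ((-1 : ℂ)) ^ (m : ℤ) = -1 := by
    rw [zpow_natCast]; exact hm.neg_one_pow
  have h2 : ((z : ℂ)) ^ (-(m : ℤ)) = ((z : ℂ) ^ m)⁻¹ := by
    rw [zpow_neg, zpow_natCast]
  rw [h1, h2] at h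
  have hz : ((z : ℂ)) ^ m ≠ 0 := pow_ne_zero _ z.coe_ne_zero
  have h3 := congrArg (· * ((z : ℂ) ^ m)) h
  have h4 : (-1 * ((z : ℂ) ^ m)⁻¹ * (starRingEnd ℂ) (v z)) * (z : ℂ) ^ m
      = -(starRingEnd ℂ) (v z) := by
    field_simp
  rw [h4] at h3
  linear_combination h3

lemma conj_circ_pow (w : Circle) (m : ℕ) :
    (starRingEnd ℂ) ((w : ℂ) ^ m) = ((w : ℂ) ^ m)⁻¹ := by
  rw [map_pow, ← Circle.coe_inv_eq_conj, Circle.coe_inv, inv_pow]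

lemma sigma_real {m : ℕ} (hm : Odd m) {v : Circle → ℂ}
    (hrel : ∀ z : Circle, (starRingEnd ℂ) (v z) = -((z : ℂ) ^ m) * v z) (ξ : Circle) :
    (Complex.I * (ξ : ℂ) ^ m * v (ξ ^ 2)).im = 0 := by
  rw [← Complex.conj_eq_iff_im]
  have h1 := hrel (ξ ^ 2)
  rw [circle_coe_sq] at h1
  rw [map_mul, map_mul, Complex.conj_I, h1, conj_circ_pow]
  have hz : ((ξ : ℂ)) ^ m ≠ 0 := pow_ne_zero _ ξ.coe_ne_zero
  field_simp
  ring

lemma lift_forward (m : ℕ) (v : Circle → ℂ) (θ : ℝ) :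
    liftC (fun ξ : Circle => Complex.I * (ξ : ℂ) ^ m * v (ξ ^ 2)) θ
      = Complex.I * Complex.exp ((((m : ℝ)) : ℂ) * (θ : ℂ) * I) * liftC v (2 * θ) := by
  show Complex.I * (Circle.exp θ : ℂ) ^ m * v ((Circle.exp θ) ^ 2) = _
  rw [exp_sq θ, Circle.coe_exp, ← Complex.exp_nat_mul]
  have h1 : ((m : ℕ) : ℂ) * ((θ : ℂ) * I) = (((m : ℝ)) : ℂ) * (θ : ℂ) * I := by
    push_cast; ring
  rw [h1]
  rfl

lemma lift_backward (m : ℕ) (v : Circle → ℂ) (θ : ℝ) :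
    liftC v θ = -Complex.I * Complex.exp ((((-(m : ℝ) / 2) : ℝ) : ℂ) * (θ : ℂ) * I)
      * liftC (fun ξ : Circle => Complex.I * (ξ : ℂ) ^ m * v (ξ ^ 2)) ((1/2) * θ) := by
  rw [lift_forward m v ((1/2) * θ), show (2 : ℝ) * ((1/2) * θ) = θ by ring]
  have h2 : Complex.exp ((((-(m : ℝ) / 2) : ℝ) : ℂ) * (θ : ℂ) * I)
      * Complex.exp ((((m : ℝ)) : ℂ) * (((1/2) * θ : ℝ) : ℂ) * I) = 1 := by
    rw [← Complex.exp_add,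
      show (((-(m : ℝ) / 2) : ℝ) : ℂ) * (θ : ℂ) * I
        + (((m : ℝ)) : ℂ) * (((1/2) * θ : ℝ) : ℂ) * I = 0 by push_cast; ring,
      Complex.exp_zero]
  have h3 : -Complex.I * Complex.exp ((((-(m : ℝ) / 2) : ℝ) : ℂ) * (θ : ℂ) * I)
      * (Complex.I * Complex.exp ((((m : ℝ)) : ℂ) * (((1/2) * θ : ℝ) : ℂ) * I) * liftC v θ)
      = (Complex.exp ((((-(m : ℝ) / 2) : ℝ) : ℂ) * (θ : ℂ) * I)
          * Complex.exp ((((m : ℝ)) : ℂ) * (((1/2) * θ : ℝ) : ℂ) * I)) * (-(I * I)) * liftC v θ := by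
    ring
  rw [h3, h2, Complex.I_mul_I]
  ring

end S3
namespace S3
open Complex Function

lemma normCkC_nonneg (k : ℕ) (α : ℝ) (f : Circle → ℂ) : 0 ≤ normCkC k α f :=
  add_nonneg (Nn_nonneg k α _) (Nn_nonneg k α _)

lemma normCkR_nonneg (k : ℕ) (α : ℝ) (f : Circle → ℂ) : 0 ≤ normCkR k α f :=
  Nn_nonneg k α _

lemma hprocess (k : ℕ) (α : ℝ) (hα : 0 < α) (hα' : α < 1) (m : ℕ) (hm : Odd m)
    {v : Circle → ℂ} (hv : v ∈ Rm k α (m : ℤ)) :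
    (fun ξ : Circle => Complex.I * (ξ : ℂ) ^ m * v (ξ ^ 2)) ∈ CkOdd k α ∧
    normCkR k α (fun ξ : Circle => Complex.I * (ξ : ℂ) ^ m * v (ξ ^ 2))
      ≤ (((k : ℝ) + 2) * (2 * (Real.pi + 1) * ‖Complex.I‖ * ((|(m : ℝ)| + |(2 : ℝ)|) + 1) ^ (k + 2)))
        * normCkC k α v ∧
    normCkC k α v
      ≤ (2 * (((k : ℝ) + 2) * (2 * (Real.pi + 1) * ‖-Complex.I‖
          * ((|(-(m : ℝ) / 2)| + |(1/2 : ℝ)|) + 1) ^ (k + 2))))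
        * normCkR k α (fun ξ : Circle => Complex.I * (ξ : ℂ) ^ m * v (ξ ^ 2)) := by
  obtain ⟨⟨hcd, hH⟩, hrel⟩ := hv
  have hm1 := master k α hα hα' Complex.I ((m : ℝ)) 2 (liftC v)
    (liftC (fun ξ : Circle => Complex.I * (ξ : ℂ) ^ m * v (ξ ^ 2))) hcd (periodic_liftC v)
    (periodic_liftC _) hH (lift_forward m v)
  have hm2 := master k α hα hα' (-Complex.I) (-(m : ℝ) / 2) (1/2)
    (liftC (fun ξ : Circle => Complex.I * (ξ : ℂ) ^ m * v (ξ ^ 2))) (liftC v)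
    hm1.1 (periodic_liftC _) (periodic_liftC v) hm1.2.1 (lift_backward m v)
  have hK10 : (0 : ℝ) ≤ ((k : ℝ) + 2) * (2 * (Real.pi + 1) * ‖Complex.I‖
      * ((|(m : ℝ)| + |(2 : ℝ)|) + 1) ^ (k + 2)) := by
    have hπ := Real.pi_pos
    have h1 : (0:ℝ) ≤ (k : ℝ) + 2 := by positivity
    have h2 : (0:ℝ) ≤ 2 * (Real.pi + 1) := by linarith
    have h3 : (0:ℝ) ≤ ((|(m : ℝ)| + |(2 : ℝ)|) + 1) ^ (k + 2) := by positivity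
    have h4 : (0:ℝ) ≤ ‖Complex.I‖ := norm_nonneg _
    nlinarith [mul_nonneg (mul_nonneg h2 h4) h3]
  have hK20 : (0 : ℝ) ≤ ((k : ℝ) + 2) * (2 * (Real.pi + 1) * ‖-Complex.I‖
      * ((|(-(m : ℝ) / 2)| + |(1/2 : ℝ)|) + 1) ^ (k + 2)) := by
    have hπ := Real.pi_pos
    have h1 : (0:ℝ) ≤ (k : ℝ) + 2 := by positivity
    have h2 : (0:ℝ) ≤ 2 * (Real.pi + 1) := by linarith
    have h3 : (0:ℝ) ≤ ((|(-(m : ℝ) / 2)| + |(1/2 : ℝ)|) + 1) ^ (k + 2) := by positivity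
    have h4 : (0:ℝ) ≤ ‖-Complex.I‖ := norm_nonneg _
    nlinarith [mul_nonneg (mul_nonneg h2 h4) h3]
  refine ⟨⟨⟨hm1.1, hm1.2.1⟩, fun z => sigma_real hm (rm_rel hm ⟨⟨hcd, hH⟩, hrel⟩) z, ?_⟩, ?_, ?_⟩
  · -- oddness
    intro z
    show Complex.I * ((negCircle z : Circle) : ℂ) ^ m * v ((negCircle z) ^ 2)
      = -(Complex.I * (z : ℂ) ^ m * v (z ^ 2))
    have h1 : (negCircle z) ^ 2 = z ^ 2 := Subtype.coe_injective (by
      show ((negCircle z ^ 2 : Circle) : ℂ) = ((z ^ 2 : Circle) : ℂ)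
      rw [circle_coe_sq, circle_coe_sq, negCircle_coe]
      ring)
    rw [h1, negCircle_coe, hm.neg_pow]
    ring
  · -- forward norm bound
    have e2 : normCkC k α v
        = Nn k α (fun t => reC (liftC v t)) + Nn k α (fun t => imC (liftC v t)) := rfl
    have h2 : Nn k α (liftC v) ≤ normCkC k α v := by
      rw [e2]; exact Nn_le_re_add_im k hα hα' hcd (periodic_liftC v) hH
    calc normCkR k α (fun ξ : Circle => Complex.I * (ξ : ℂ) ^ m * v (ξ ^ 2))
        = Nn k α (liftC (fun ξ : Circle => Complex.I * (ξ : ℂ) ^ m * v (ξ ^ 2))) := rfl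
      _ ≤ (((k : ℝ) + 2) * (2 * (Real.pi + 1) * ‖Complex.I‖
            * ((|(m : ℝ)| + |(2 : ℝ)|) + 1) ^ (k + 2))) * Nn k α (liftC v) := hm1.2.2
      _ ≤ _ := mul_le_mul_of_nonneg_left h2 hK10
  · -- backward norm bound
    have e2 : normCkC k α v
        = Nn k α (fun t => reC (liftC v t)) + Nn k α (fun t => imC (liftC v t)) := rfl
    have h4 : Nn k α (fun t => reC (liftC v t)) ≤ Nn k α (liftC v) :=
      Nn_clm_le k hα hα' reC norm_reC hcd (periodic_liftC v) hH
    have h5 : Nn k α (fun t => imC (liftC v t)) ≤ Nn k α (liftC v) :=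
      Nn_clm_le k hα hα' imC norm_imC hcd (periodic_liftC v) hH
    have h6 := hm2.2.2
    calc normCkC k α v ≤ 2 * Nn k α (liftC v) := by rw [e2]; linarith
      _ ≤ 2 * ((((k : ℝ) + 2) * (2 * (Real.pi + 1) * ‖-Complex.I‖
            * ((|(-(m : ℝ) / 2)| + |(1/2 : ℝ)|) + 1) ^ (k + 2)))
          * Nn k α (liftC (fun ξ : Circle => Complex.I * (ξ : ℂ) ^ m * v (ξ ^ 2)))) := by
          have : (0:ℝ) ≤ 2 := by norm_num
          exact mul_le_mul_of_nonneg_left h6 this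
      _ = (2 * (((k : ℝ) + 2) * (2 * (Real.pi + 1) * ‖-Complex.I‖
            * ((|(-(m : ℝ) / 2)| + |(1/2 : ℝ)|) + 1) ^ (k + 2))))
          * normCkR k α (fun ξ : Circle => Complex.I * (ξ : ℂ) ^ m * v (ξ ^ 2)) := by
          rw [show normCkR k α (fun ξ : Circle => Complex.I * (ξ : ℂ) ^ m * v (ξ ^ 2))
            = Nn k α (liftC (fun ξ : Circle => Complex.I * (ξ : ℂ) ^ m * v (ξ ^ 2))) from rfl]
          ring

lemma hsurj (k : ℕ) (α : ℝ) (hα : 0 < α) (hα' : α < 1) (m : ℕ) (hm : Odd m)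
    {u : Circle → ℂ} (hu : u ∈ CkOdd k α) :
    ∃ v ∈ Rm k α (m : ℤ), (fun ξ : Circle => Complex.I * (ξ : ℂ) ^ m * v (ξ ^ 2)) = u := by
  obtain ⟨⟨hucd, huH⟩, hureal, huodd⟩ := hu
  have hinv : ∀ w ξ : Circle, (w : ℂ) ^ 2 = (ξ : ℂ) ^ 2 →
      -Complex.I * ((w : ℂ))⁻¹ ^ m * u w = -Complex.I * ((ξ : ℂ))⁻¹ ^ m * u ξ := by
    intro w ξ hsq
    rcases sq_eq_cases hsq with h | h
    · rw [h]
    · rw [h, negCircle_coe, huodd ξ, inv_neg, hm.neg_pow]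
      ring
  have hveq : ∀ ξ : Circle,
      (fun z => -Complex.I * ((sqrtC z : Circle) : ℂ)⁻¹ ^ m * u (sqrtC z)) (ξ ^ 2)
        = -Complex.I * ((ξ : ℂ))⁻¹ ^ m * u ξ := by
    intro ξ
    show -Complex.I * ((sqrtC (ξ ^ 2) : Circle) : ℂ)⁻¹ ^ m * u (sqrtC (ξ ^ 2)) = _
    apply hinv
    rw [← circle_coe_sq, ← circle_coe_sq, sqrtC_sq]
  have hσu : (fun ξ : Circle => Complex.I * (ξ : ℂ) ^ m
      * ((fun z => -Complex.I * ((sqrtC z : Circle) : ℂ)⁻¹ ^ m * u (sqrtC z)) (ξ ^ 2))) = u := by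
    funext ξ
    rw [hveq ξ]
    have hz : (ξ : ℂ) ≠ 0 := ξ.coe_ne_zero
    have h5 : (ξ : ℂ) ^ m * ((ξ : ℂ)⁻¹) ^ m = 1 := by
      rw [← mul_pow, mul_inv_cancel₀ hz, one_pow]
    calc Complex.I * (ξ : ℂ) ^ m * (-Complex.I * ((ξ : ℂ)⁻¹) ^ m * u ξ)
        = (-(Complex.I * Complex.I)) * ((ξ : ℂ) ^ m * ((ξ : ℂ)⁻¹) ^ m) * u ξ := by ring
      _ = u ξ := by rw [h5, Complex.I_mul_I]; ring
  have hh : ∀ θ : ℝ,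
      liftC (fun z => -Complex.I * ((sqrtC z : Circle) : ℂ)⁻¹ ^ m * u (sqrtC z)) θ
        = -Complex.I * Complex.exp ((((-(m : ℝ) / 2) : ℝ) : ℂ) * (θ : ℂ) * I)
          * liftC u ((1/2) * θ) := by
    intro θ
    have hb := lift_backward m
      (fun z => -Complex.I * ((sqrtC z : Circle) : ℂ)⁻¹ ^ m * u (sqrtC z)) θ
    rw [hσu] at hb
    exact hb
  have hmaster3 := master k α hα hα' (-Complex.I) (-(m : ℝ) / 2) (1/2) (liftC u)
    (liftC (fun z => -Complex.I * ((sqrtC z : Circle) : ℂ)⁻¹ ^ m * u (sqrtC z)))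
    hucd (periodic_liftC u) (periodic_liftC _) huH hh
  refine ⟨fun z => -Complex.I * ((sqrtC z : Circle) : ℂ)⁻¹ ^ m * u (sqrtC z),
    ⟨⟨hmaster3.1, hmaster3.2.1⟩, ?_⟩, hσu⟩
  intro z
  have hw : ((sqrtC z : Circle) : ℂ) ^ 2 = (z : ℂ) := by rw [← circle_coe_sq, sqrtC_sq]
  show -Complex.I * ((sqrtC z : Circle) : ℂ)⁻¹ ^ m * u (sqrtC z)
    = (-1 : ℂ) ^ (m : ℤ) * (z : ℂ) ^ (-(m : ℤ)) * (starRingEnd ℂ)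
        (-Complex.I * ((sqrtC z : Circle) : ℂ)⁻¹ ^ m * u (sqrtC z))
  have h1 : (starRingEnd ℂ) (-Complex.I * ((sqrtC z : Circle) : ℂ)⁻¹ ^ m * u (sqrtC z))
      = Complex.I * ((sqrtC z : Circle) : ℂ) ^ m * u (sqrtC z) := by
    rw [map_mul, map_mul, map_neg, Complex.conj_I, map_pow, map_inv₀]
    rw [show (starRingEnd ℂ) ((sqrtC z : Circle) : ℂ) = ((sqrtC z : Circle) : ℂ)⁻¹ from by
      rw [← Circle.coe_inv_eq_conj, Circle.coe_inv], inv_inv]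
    rw [Complex.conj_eq_iff_im.mpr (hureal (sqrtC z))]
    ring
  rw [h1, show ((-1 : ℂ)) ^ (m : ℤ) = -1 from by rw [zpow_natCast]; exact hm.neg_one_pow,
    show (z : ℂ) ^ (-(m : ℤ)) = ((z : ℂ) ^ m)⁻¹ from by rw [zpow_neg, zpow_natCast], ← hw]
  have hwz : ((sqrtC z : Circle) : ℂ) ≠ 0 := (sqrtC z).coe_ne_zero
  have e : ((((sqrtC z : Circle) : ℂ) ^ 2) ^ m)⁻¹ * ((sqrtC z : Circle) : ℂ) ^ m
      = ((sqrtC z : Circle) : ℂ)⁻¹ ^ m := by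
    rw [inv_pow, ← pow_mul, mul_comm 2 m, pow_mul, sq, mul_inv, mul_assoc,
      inv_mul_cancel₀ (pow_ne_zero _ hwz), mul_one]
  linear_combination (Complex.I * u (sqrtC z)) * e

end S3

/-- For odd `m`, the map `v(ζ) ↦ i ζ^m v(ζ²)` sends `R_m` isomorphically
onto the space `C^{k,α}_o` of odd real-valued `C^{k,α}` functions on `bΔ`. -/
theorem stmt_3 (k : ℕ) (α : ℝ) (hα : 0 < α) (hα' : α < 1) (m : ℕ) (hm : Odd m) :
    let σ : (Circle → ℂ) → (Circle → ℂ) := fun v => fun ξ => Complex.I * (ξ : ℂ) ^ m * v (ξ ^ 2)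
    Set.BijOn σ (Rm k α (m : ℤ)) (CkOdd k α) ∧
    (∀ v w : Circle → ℂ, σ (v + w) = σ v + σ w) ∧
    (∀ (c : ℝ) (v : Circle → ℂ), σ (c • v) = c • σ v) ∧
    ∃ C > 0, ∀ v ∈ Rm k α (m : ℤ),
      normCkR k α (σ v) ≤ C * normCkC k α v ∧ normCkC k α v ≤ C * normCkR k α (σ v) := by
  intro σ
  have hπ := Real.pi_pos
  set K1 : ℝ := ((k : ℝ) + 2) * (2 * (Real.pi + 1) * ‖Complex.I‖
    * ((|(m : ℝ)| + |(2 : ℝ)|) + 1) ^ (k + 2)) with hK1def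
  set K2 : ℝ := 2 * (((k : ℝ) + 2) * (2 * (Real.pi + 1) * ‖-Complex.I‖
    * ((|(-(m : ℝ) / 2)| + |(1/2 : ℝ)|) + 1) ^ (k + 2))) with hK2def
  have hK10 : 0 ≤ K1 := by
    rw [hK1def]
    have h1 : (0:ℝ) ≤ (k : ℝ) + 2 := by positivity
    have h2 : (0:ℝ) ≤ 2 * (Real.pi + 1) := by linarith
    have h3 : (0:ℝ) ≤ ((|(m : ℝ)| + |(2 : ℝ)|) + 1) ^ (k + 2) := by positivity
    nlinarith [mul_nonneg (mul_nonneg h2 (norm_nonneg (Complex.I))) h3]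
  have hK20 : 0 ≤ K2 := by
    rw [hK2def]
    have h1 : (0:ℝ) ≤ (k : ℝ) + 2 := by positivity
    have h2 : (0:ℝ) ≤ 2 * (Real.pi + 1) := by linarith
    have h3 : (0:ℝ) ≤ ((|(-(m : ℝ) / 2)| + |(1/2 : ℝ)|) + 1) ^ (k + 2) := by positivity
    nlinarith [mul_nonneg (mul_nonneg h2 (norm_nonneg (-Complex.I))) h3]
  refine ⟨⟨?_, ?_, ?_⟩, ?_, ?_, ?_⟩
  · -- MapsTo
    intro v hv
    exact (S3.hprocess k α hα hα' m hm hv).1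
  · -- InjOn
    intro v _ w _ heq
    funext z
    have h1 : Complex.I * ((S3.sqrtC z : Circle) : ℂ) ^ m * v ((S3.sqrtC z) ^ 2)
        = Complex.I * ((S3.sqrtC z : Circle) : ℂ) ^ m * w ((S3.sqrtC z) ^ 2) :=
      congrFun heq (S3.sqrtC z)
    rw [S3.sqrtC_sq] at h1
    exact mul_left_cancel₀
      (mul_ne_zero Complex.I_ne_zero (pow_ne_zero _ (S3.sqrtC z).coe_ne_zero)) h1
  · -- SurjOn
    intro u hu
    obtain ⟨v, hvmem, hveq⟩ := S3.hsurj k α hα hα' m hm hu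
    exact ⟨v, hvmem, hveq⟩
  · -- additivity
    intro v w
    funext ξ
    show Complex.I * (ξ : ℂ) ^ m * (v (ξ ^ 2) + w (ξ ^ 2))
      = Complex.I * (ξ : ℂ) ^ m * v (ξ ^ 2) + Complex.I * (ξ : ℂ) ^ m * w (ξ ^ 2)
    ring
  · -- scalar multiplication
    intro c v
    funext ξ
    show Complex.I * (ξ : ℂ) ^ m * (c • v (ξ ^ 2)) = c • (Complex.I * (ξ : ℂ) ^ m * v (ξ ^ 2))
    rw [Complex.real_smul, Complex.real_smul]
    ring
  · -- norm equivalence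
    refine ⟨max K1 K2 + 1, ?_, ?_⟩
    · have : 0 ≤ max K1 K2 := le_trans hK10 (le_max_left _ _)
      linarith
    · intro v hv
      have hp := S3.hprocess k α hα hα' m hm hv
      have hC1 : K1 ≤ max K1 K2 + 1 := by
        have := le_max_left K1 K2
        linarith
      have hC2 : K2 ≤ max K1 K2 + 1 := by
        have := le_max_right K1 K2
        linarith
      constructor
      · refine (hp.2.1).trans ?_
        exact mul_le_mul_of_nonneg_right (hK1def ▸ hC1) (S3.normCkC_nonneg k α v)
      · refine (hp.2.2).trans ?_
        exact mul_le_mul_of_nonneg_right (hK2def ▸ hC2) (S3.normCkR_nonneg k α _)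
end
end

section
/- Let k be a nonnegative integer, 0 < α < 1, and l ≥ 0 an integer. If f ∈ A^{k,α} satisfies f(ζ) ± ζ^l conj(f(ζ)) = 0 for all ζ ∈ bΔ, then f is a polynomial f(ζ) = Σ_{k=0}^{l} a_k ζ^k of degree at most l whose coefficients satisfy a_k = ∓ conj(a_{l-k}) for k = 0, …, l (with the sign matching the equation: a_k = -conj(a_{l-k}) for the '+' equation and a_k = conj(a_{l-k}) for the '-' equation). -/
noncomputable section

open Complex Metric Set Finset
open scoped Classical

private lemma iconj_aux (f : ℝ → ℂ) (a b : ℝ) :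
    (∫ x in a..b, (starRingEnd ℂ) (f x)) = (starRingEnd ℂ) (∫ x in a..b, f x) := by
  simp only [intervalIntegral, map_sub, integral_conj]

/-- If `f ∈ A^{k,α}` satisfies `f(ζ) ± ζ^l conj (f ζ) = 0` on `bΔ`
(`l ≥ 0`), then `f` is a polynomial `Σ_{j=0}^{l} a_j ζ^j` of degree at most `l` with
coefficients satisfying `a_j = ∓ conj (a_{l-j})`. -/
theorem stmt_5 (k : ℕ) (α : ℝ) (hα : 0 < α) (hα' : α < 1) (l : ℕ)
    (ε : ℂ) (hε : ε = 1 ∨ ε = -1) (f : ClosedDisc → ℂ) (hf : IsA k α f)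
    (heq : ∀ z : Circle, f (bd z) + ε * (z : ℂ) ^ l * (starRingEnd ℂ) (f (bd z)) = 0) :
    ∃ a : ℕ → ℂ,
      (∀ z : ClosedDisc, f z = ∑ j ∈ Finset.range (l + 1), a j * (z : ℂ) ^ j) ∧
      ∀ j ≤ l, a j = -ε * (starRingEnd ℂ) (a (l - j)) := by
  obtain ⟨hc, hd, -⟩ := hf
  set g : ℂ → ℂ := extD f with hgdef
  have hgx : ∀ x : ClosedDisc, g ↑x = f x := by
    intro x
    simp only [hgdef, extD, x.2, dif_pos, Subtype.coe_eta]
  set E : ℝ → ℂ := fun θ => Complex.exp (θ * I) with hE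
  have hEne : ∀ θ, E θ ≠ 0 := fun θ => Complex.exp_ne_zero _
  set Jm : ℤ → ℂ := fun m => ∫ θ in (0:ℝ)..(2*Real.pi), E θ ^ m * g (E θ) with hJm
  -- Lemma A: circle integrals as interval integrals
  have lemA : ∀ m : ℤ, (∮ z in C(0, 1), z ^ m * g z) = I * Jm (m + 1) := by
    intro m
    rw [hJm]
    rw [← intervalIntegral.integral_const_mul]
    simp only [circleIntegral, deriv_circleMap, circleMap_zero, ofReal_one, one_mul,
      smul_eq_mul]
    apply intervalIntegral.integral_congr
    intro θ _
    show (E θ * I) * (E θ ^ m * g (E θ)) = I * (E θ ^ (m+1) * g (E θ))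
    rw [zpow_add_one₀ (hEne θ)]; ring
  -- Lemma B: vanishing of nonnegative power moments
  have lemB : ∀ m : ℤ, 1 ≤ m → Jm m = 0 := by
    intro m hm
    have h1 : (∮ z in C(0, 1), z ^ (m - 1) * g z) = 0 := by
      obtain ⟨n, hn⟩ : ∃ n : ℕ, m - 1 = (n : ℤ) :=
        ⟨(m-1).toNat, (Int.toNat_of_nonneg (by omega)).symm⟩
      rw [hn]
      have hfun : (fun z : ℂ => z ^ (n:ℤ) * g z) = fun z => z ^ n * g z := by
        funext z; rw [zpow_natCast]
      rw [hfun]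
      exact Complex.circleIntegral_eq_zero_of_differentiable_on_off_countable zero_le_one
        Set.countable_empty ((continuous_pow n).continuousOn.mul hc)
        (fun z hz => (differentiableAt_pow n).mul
          (hd.differentiableAt (isOpen_ball.mem_nhds hz.1)))
    have h2 := lemA (m - 1)
    rw [h1, sub_add_cancel] at h2
    have h3 : I * Jm m = 0 := h2.symm
    rcases mul_eq_zero.1 h3 with h | h
    · exact absurd h I_ne_zero
    · exact h
  -- boundary relation
  have hbd : ∀ θ : ℝ, g (E θ) = -ε * E θ ^ (l : ℕ) * (starRingEnd ℂ) (g (E θ)) := by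
    intro θ
    have h1 := heq (Circle.exp θ)
    have h3 : ((Circle.exp θ : ℂ)) = E θ := by
      rw [Circle.coe_exp, hE]
    have h2 : g (E θ) = f (bd (Circle.exp θ)) := by
      rw [← hgx (bd (Circle.exp θ))]
      congr 1
    rw [h3] at h1
    rw [h2]
    linear_combination h1
  have hconjE : ∀ θ : ℝ, (starRingEnd ℂ) (E θ) = (E θ)⁻¹ := by
    intro θ
    rw [hE]
    rw [← Complex.exp_conj, ← Complex.exp_neg]
    congr 1
    simp [Complex.conj_I]
  -- Lemma C: symmetry relation of moments
  have lemC : ∀ m : ℤ, Jm m = -ε * (starRingEnd ℂ) (Jm (-(m + l))) := by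
    intro m
    have key : ∀ θ : ℝ, E θ ^ m * g (E θ)
        = -ε * (starRingEnd ℂ) (E θ ^ (-(m + (l:ℤ))) * g (E θ)) := by
      intro θ
      conv_lhs => rw [hbd θ]
      rw [map_mul, map_zpow₀, hconjE θ, inv_zpow, ← zpow_neg, neg_neg,
        zpow_add₀ (hEne θ), zpow_natCast]
      ring
    calc Jm m = ∫ θ in (0:ℝ)..(2*Real.pi),
          -ε * (starRingEnd ℂ) (E θ ^ (-(m + (l:ℤ))) * g (E θ)) :=
        intervalIntegral.integral_congr (fun θ _ => key θ)
      _ = -ε * (starRingEnd ℂ) (Jm (-(m + l))) := by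
        rw [intervalIntegral.integral_const_mul, iconj_aux]
  -- coefficients
  set a : ℕ → ℂ := fun n => (2 * (Real.pi:ℂ))⁻¹ * Jm (-(n:ℤ)) with ha
  have hvan : ∀ n : ℕ, l < n → a n = 0 := by
    intro n hn
    have h1 := lemC (-(n:ℤ))
    rw [lemB (-(-(n:ℤ) + l)) (by omega)] at h1
    simp only [map_zero, mul_zero] at h1
    simp [ha, h1]
  have hrel : ∀ j ≤ l, a j = -ε * (starRingEnd ℂ) (a (l - j)) := by
    intro j hj
    have h1 := lemC (-(j:ℤ))
    have h2 : -(-(j:ℤ) + l) = -(((l - j : ℕ) : ℤ)) := by push_cast; omega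
    rw [h2] at h1
    have h3 : (starRingEnd ℂ) ((2 * (Real.pi:ℂ))⁻¹) = (2 * (Real.pi:ℂ))⁻¹ := by
      rw [map_inv₀, map_mul, Complex.conj_ofReal, map_ofNat]
    simp only [ha]
    rw [h1, map_mul, h3]
    ring
  -- power series expansion
  have hps : HasFPowerSeriesOnBall g (cauchyPowerSeries g 0 1) 0 1 := by
    have h := Complex.hasFPowerSeriesOnBall_of_differentiable_off_countable
      (R := 1) (c := 0) (s := ∅) Set.countable_empty (by simpa using hc)
      (fun z hz => hd.differentiableAt (isOpen_ball.mem_nhds (by simpa using hz.1)))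
      one_pos
    simpa using h
  have hcoef : ∀ (n : ℕ) (w : ℂ),
      (cauchyPowerSeries g 0 1 n fun _ => w) = a n * w ^ n := by
    intro n w
    rw [cauchyPowerSeries_apply]
    have h1 : Set.EqOn (fun z : ℂ => (w / (z - 0)) ^ n • (z - 0)⁻¹ • g z)
        (fun z : ℂ => w ^ n * (z ^ (-(n:ℤ) - 1) * g z)) (Metric.sphere (0:ℂ) 1) := by
      intro z hz
      have hz0 : z ≠ 0 := by
        intro h; rw [h] at hz; simp at hz
      simp only [sub_zero, smul_eq_mul, div_pow]
      rw [zpow_sub₀ hz0, zpow_neg, zpow_natCast, zpow_one]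
      field_simp
    rw [circleIntegral.integral_congr zero_le_one h1,
      circleIntegral.integral_const_mul, lemA (-(n:ℤ) - 1)]
    have h4 : -(n:ℤ) - 1 + 1 = -(n:ℤ) := by ring
    rw [h4]
    simp only [ha, smul_eq_mul]
    have hI : (I : ℂ) ≠ 0 := I_ne_zero
    have hpi : ((Real.pi : ℂ)) ≠ 0 := Complex.ofReal_ne_zero.2 Real.pi_ne_zero
    field_simp
  have hball : ∀ w ∈ Metric.ball (0:ℂ) 1,
      g w = ∑ j ∈ Finset.range (l + 1), a j * w ^ j := by
    intro w hw
    have hw' : w ∈ Metric.eball (0:ℂ) 1 := by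
      rw [mem_emetric_ball_zero_iff]
      rw [← ofReal_norm]
      exact ENNReal.ofReal_lt_one.2 (mem_ball_zero_iff.1 hw)
    have hs := hps.hasSum hw'
    rw [zero_add] at hs
    have hs' : HasSum (fun n => a n * w ^ n) (g w) := by
      simpa only [hcoef] using hs
    refine hs'.unique ?_
    apply hasSum_sum_of_ne_finset_zero
    intro n hn
    rw [hvan n (by simpa using hn)]
    ring
  refine ⟨a, ?_, hrel⟩
  intro z
  have heqcl : Set.EqOn g (fun w => ∑ j ∈ Finset.range (l+1), a j * w ^ j)
      (Metric.closedBall (0:ℂ) 1) :=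
    Set.EqOn.of_subset_closure hball hc
      ((continuous_finset_sum _ fun j _ => continuous_const.mul (continuous_pow j)).continuousOn)
      Metric.ball_subset_closedBall
      (by rw [closure_ball (0:ℂ) one_ne_zero])
  rw [← hgx z]
  exact heqcl z.2
end
end

section
/- In the odd case of the surjectivity analysis for the operator f ↦ Re[ζ^{-r} f] on (1-ζ)^m A^{k,α}: let m = 2m'+1 be odd, r an integer with r - m' ≥ 0, and let u ∈ R_1 = { u ∈ C^{k,α}_ℂ : u(ζ) = -ζ^{-1} conj(u(ζ)) on bΔ }. Write u = u' + u'' where u' = P(u) is the Szegő projection of u onto A^{k,α}. Then u'' = -conj(ζ u') on bΔ, and f' = ζ^{r-m'} u' ∈ A^{k,α} satisfies ζ^{-(r-m')} f' - ζ^{r-m'} conj(ζ f') = u on bΔ. -/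
noncomputable section

open Complex Metric Set Finset
open scoped Classical

/-! ### Auxiliary lemmas -/

section Aux

open Filter

/-- A continuous function on the closed disc which is constant on the open disc is constant. -/
lemma eqOn_const_of_ball {f : ℂ → ℂ} {c : ℂ} (hc : ContinuousOn f (Metric.closedBall 0 1))
    (h : ∀ z ∈ Metric.ball (0:ℂ) 1, f z = c) : ∀ z ∈ Metric.closedBall (0:ℂ) 1, f z = c := by
  intro z hz
  have hzc : z ∈ closure (Metric.ball (0:ℂ) 1) := by
    rwa [closure_ball (0:ℂ) one_ne_zero]
  have hne : (nhdsWithin z (Metric.ball (0:ℂ) 1)).NeBot :=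
    mem_closure_iff_nhdsWithin_neBot.1 hzc
  have h1 : Filter.Tendsto f (nhdsWithin z (Metric.ball (0:ℂ) 1)) (nhds (f z)) :=
    (hc z hz).mono Metric.ball_subset_closedBall
  have h2 : Filter.Tendsto f (nhdsWithin z (Metric.ball (0:ℂ) 1)) (nhds c) := by
    refine Filter.Tendsto.congr' ?_ tendsto_const_nhds
    filter_upwards [self_mem_nhdsWithin] with w hw using (h w hw).symm
  exact tendsto_nhds_unique h1 h2

/-- Core analytic lemma: a holomorphic function on the disc, continuous up to the boundary,
such that `Re ((1+w) g w) = 0` on the boundary circle, vanishes on the closed disc. -/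
lemma core_zero {g : ℂ → ℂ} (hc : ContinuousOn g (Metric.closedBall 0 1))
    (hd : DifferentiableOn ℂ g (Metric.ball 0 1))
    (hb : ∀ w ∈ Metric.sphere (0:ℂ) 1, ((1 + w) * g w).re = 0) :
    ∀ w ∈ Metric.closedBall (0:ℂ) 1, g w = 0 := by
  set F : ℂ → ℂ := fun z => (1 + z) * g z with hFdef
  have hFc : ContinuousOn F (Metric.closedBall 0 1) :=
    (continuousOn_const.add continuousOn_id).mul hc
  have hFd : DifferentiableOn ℂ F (Metric.ball 0 1) :=
    (((differentiable_const (1:ℂ)).add differentiable_id).differentiableOn).mul hd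
  have hclos : closure (Metric.ball (0:ℂ) 1) = Metric.closedBall (0:ℂ) 1 :=
    closure_ball (0:ℂ) one_ne_zero
  have hFcl : DiffContOnCl ℂ F (Metric.ball 0 1) := ⟨hFd, by rwa [hclos]⟩
  -- step 1 : `Re F = 0` on the closed disc, by the maximum principle applied to `exp (± F)`
  have hre : ∀ z ∈ Metric.closedBall (0:ℂ) 1, (F z).re = 0 := by
    intro z hz
    have hz' : z ∈ closure (Metric.ball (0:ℂ) 1) := by rwa [hclos]
    have key : ∀ s : ℝ, s = 1 ∨ s = -1 → Real.exp (s * (F z).re) ≤ 1 := by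
      intro s hs
      have hdc : DiffContOnCl ℂ (fun w => Complex.exp ((s:ℂ) * F w)) (Metric.ball 0 1) := by
        have : Differentiable ℂ (fun w : ℂ => Complex.exp ((s:ℂ) * w)) :=
          Complex.differentiable_exp.comp ((differentiable_const _).mul differentiable_id)
        exact this.comp_diffContOnCl hFcl
      have hb' : ∀ w ∈ frontier (Metric.ball (0:ℂ) 1),
          ‖Complex.exp ((s:ℂ) * F w)‖ ≤ 1 := by
        intro w hw
        rw [frontier_ball (0:ℂ) one_ne_zero] at hw
        have hFw : (F w).re = 0 := hb w hw
        have : ((s:ℂ) * F w).re = 0 := by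
          rw [Complex.mul_re, Complex.ofReal_re, Complex.ofReal_im, hFw]
          ring
        rw [Complex.norm_exp, this, Real.exp_zero]
      have := Complex.norm_le_of_forall_mem_frontier_norm_le Metric.isBounded_ball hdc hb' hz'
      rwa [Complex.norm_exp, Complex.mul_re, Complex.ofReal_re,
        Complex.ofReal_im, zero_mul, sub_zero] at this
    have h1 : Real.exp ((F z).re) ≤ 1 := by simpa using key 1 (Or.inl rfl)
    have h2 : Real.exp (-(F z).re) ≤ 1 := by
      have := key (-1) (Or.inr rfl); simpa using this
    have h1' : (F z).re ≤ 0 := Real.exp_le_one_iff.1 h1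
    have h2' : 0 ≤ (F z).re := by
      have := Real.exp_le_one_iff.1 h2; linarith
    linarith
  -- step 2 : `exp ∘ F` is constant on the ball (max modulus)
  have hmax : Set.EqOn (fun z => Complex.exp (F z)) (Function.const ℂ (Complex.exp (F 0)))
      (Metric.ball (0:ℂ) 1) := by
    refine Complex.eqOn_of_isPreconnected_of_isMaxOn_norm
      (convex_ball (0:ℂ) 1).isPreconnected Metric.isOpen_ball hFd.cexp
      (Metric.mem_ball_self one_pos) ?_
    refine isMaxOn_iff.2 fun x hx => ?_
    have hx0 : (F x).re = 0 := hre x (Metric.ball_subset_closedBall hx)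
    have h00 : (F 0).re = 0 := hre 0 (Metric.mem_closedBall_self zero_le_one)
    simp [Complex.norm_exp, hx0, h00]
  -- step 3 : `F` is constant on the ball
  have hconst : ∀ z ∈ Metric.ball (0:ℂ) 1, F z = F 0 := by
    intro z hz
    refine (convex_ball (0:ℂ) 1).is_const_of_fderivWithin_eq_zero hFd ?_ hz
      (Metric.mem_ball_self one_pos)
    intro x hx
    have hxd : DifferentiableAt ℂ F x :=
      hFd.differentiableAt (Metric.isOpen_ball.mem_nhds hx)
    have h1 : HasDerivAt (fun w => Complex.exp (F w)) (Complex.exp (F x) * deriv F x) x :=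
      hxd.hasDerivAt.cexp
    have h2 : HasDerivAt (fun w => Complex.exp (F w)) 0 x := by
      have heq : (fun w => Complex.exp (F w)) =ᶠ[nhds x]
          (fun _ => Complex.exp (F 0)) := by
        filter_upwards [Metric.isOpen_ball.mem_nhds hx] with w hw using hmax hw
      exact (Filter.EventuallyEq.hasDerivAt_iff heq).2 (hasDerivAt_const _ _)
    have h3 : deriv F x = 0 :=
      (mul_eq_zero.1 (h1.unique h2)).resolve_left (Complex.exp_ne_zero (F x))
    have h6 : HasFDerivAt F (0 : ℂ →L[ℂ] ℂ) x := by
      have h7 := hxd.hasDerivAt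
      rw [h3] at h7
      have h8 := h7.hasFDerivAt
      have h9 : ContinuousLinearMap.toSpanSingleton ℂ (0:ℂ) = 0 := by
        ext w; simp
      rwa [h9] at h8
    exact (h6.hasFDerivWithinAt).fderivWithin (Metric.isOpen_ball.uniqueDiffOn x hx)
  -- step 4 : the constant is `0` since `F (-1) = 0`
  have hF0 : F 0 = 0 := by
    have hm1 : (-1 : ℂ) ∈ Metric.closedBall (0:ℂ) 1 := by
      simp [Metric.mem_closedBall]
    have := eqOn_const_of_ball hFc hconst (-1) hm1
    rw [← this, hFdef]
    simp
  -- step 5 : `g = 0` on the ball, hence on the closed ball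
  refine eqOn_const_of_ball hc ?_
  intro z hz
  have hz1 : (1 + z) ≠ 0 := by
    intro hcontra
    have : z = -1 := by linear_combination hcontra
    rw [this] at hz
    simp [Metric.mem_ball] at hz
  have : (1 + z) * g z = 0 := by
    have := hconst z hz
    rw [hF0] at this
    exact this
  exact (mul_eq_zero.1 this).resolve_left hz1

/-! #### Hölder toolkit -/

lemma holderWith_mul {C D M M' β : NNReal} {f g : ℝ → ℂ}
    (hf : HolderWith C β f) (hg : HolderWith D β g)
    (hfM : ∀ x, ‖f x‖₊ ≤ M) (hgM : ∀ x, ‖g x‖₊ ≤ M') :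
    HolderWith (M * D + C * M') β (fun x => f x * g x) := by
  intro x y
  have key : f x * g x - f y * g y = f x * (g x - g y) + (f x - f y) * g y := by ring
  rw [edist_nndist, nndist_eq_nnnorm, key]
  calc (↑‖f x * (g x - g y) + (f x - f y) * g y‖₊ : ENNReal)
      ≤ ↑(‖f x * (g x - g y)‖₊ + ‖(f x - f y) * g y‖₊) := by
        exact_mod_cast nnnorm_add_le _ _
    _ = (↑(‖f x‖₊ * ‖g x - g y‖₊) + ↑(‖f x - f y‖₊ * ‖g y‖₊) : ENNReal) := by
        push_cast [nnnorm_mul]; ring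
    _ ≤ (↑M * edist (g x) (g y) + edist (f x) (f y) * ↑M' : ENNReal) := by
        rw [edist_nndist, nndist_eq_nnnorm, edist_nndist, nndist_eq_nnnorm]
        push_cast
        gcongr <;> [exact_mod_cast hfM x; exact_mod_cast hgM y]
    _ ≤ (↑M * (↑D * edist x y ^ (β:ℝ)) + (↑C * edist x y ^ (β:ℝ)) * ↑M' : ENNReal) := by
        gcongr
        · exact hg x y
        · exact hf x y
    _ = ↑(M * D + C * M') * edist x y ^ (β:ℝ) := by
        push_cast; ring

lemma holderWith_of_lip {L M β : NNReal} (hβ : (β:ℝ) ≤ 1) {f : ℝ → ℂ}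
    (hf : LipschitzWith L f) (hM : ∀ x, ‖f x‖₊ ≤ M) :
    HolderWith (L + 2 * M) β f := by
  intro x y
  rcases le_total (edist x y) 1 with hxy | hxy
  · have h1 : edist x y ≤ edist x y ^ (β:ℝ) := by
      nth_rewrite 1 [← ENNReal.rpow_one (edist x y)]
      exact ENNReal.rpow_le_rpow_of_exponent_ge hxy hβ
    calc edist (f x) (f y) ≤ ↑L * edist x y := hf.edist_le_mul x y
      _ ≤ ↑L * edist x y ^ (β:ℝ) := by gcongr
      _ ≤ ↑(L + 2 * M) * edist x y ^ (β:ℝ) := by gcongr; exact_mod_cast le_add_of_nonneg_right zero_le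
  · have h1 : (1:ENNReal) ≤ edist x y ^ (β:ℝ) := by
      rw [← ENNReal.one_rpow (β:ℝ)]
      exact ENNReal.rpow_le_rpow hxy (by positivity)
    calc edist (f x) (f y) = ↑‖f x - f y‖₊ := by rw [edist_nndist, nndist_eq_nnnorm]
      _ ≤ ↑(‖f x‖₊ + ‖f y‖₊) := by exact_mod_cast nnnorm_sub_le _ _
      _ ≤ ↑(2 * M) := by
          push_cast
          have := hM x; have := hM y
          calc (↑‖f x‖₊ + ↑‖f y‖₊ : ENNReal) ≤ ↑M + ↑M := by
                gcongr <;> exact_mod_cast ‹_›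
            _ = 2 * ↑M := by ring
      _ = ↑(2 * M) * 1 := (mul_one _).symm
      _ ≤ ↑(2 * M) * edist x y ^ (β:ℝ) := by gcongr
      _ ≤ ↑(L + 2 * M) * edist x y ^ (β:ℝ) := by gcongr; exact_mod_cast le_add_of_nonneg_left zero_le

lemma periodic_bdd {g : ℝ → ℂ} (hg : Continuous g) (hper : Function.Periodic g (2 * Real.pi)) :
    ∃ M : NNReal, ∀ x, ‖g x‖₊ ≤ M := by
  obtain ⟨M, hM⟩ :=
    (isCompact_Icc (a := (0:ℝ)) (b := 2 * Real.pi)).exists_bound_of_continuousOn hg.continuousOn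
  refine ⟨⟨max M 0, le_max_right _ _⟩, fun x => ?_⟩
  obtain ⟨y, hy, hxy⟩ := hper.exists_mem_Ico₀ Real.two_pi_pos x
  apply NNReal.coe_le_coe.1; rw [coe_nnnorm]
  calc ‖g x‖ = ‖g y‖ := by rw [hxy]
    _ ≤ M := hM y (Set.mem_Icc_of_Ico hy)
    _ ≤ max M 0 := le_max_left _ _

lemma periodic_deriv' {g : ℝ → ℂ} (hper : Function.Periodic g (2 * Real.pi)) :
    Function.Periodic (deriv g) (2 * Real.pi) := by
  intro x
  have h1 : deriv (fun y => g (y + 2 * Real.pi)) x = deriv g (x + 2 * Real.pi) := by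
    exact deriv_comp_add_const g (2 * Real.pi) x
  rw [← h1]
  congr 1
  funext y
  exact hper y

lemma periodic_iteratedDeriv {g : ℝ → ℂ} (hper : Function.Periodic g (2 * Real.pi)) (n : ℕ) :
    Function.Periodic (iteratedDeriv n g) (2 * Real.pi) := by
  induction n with
  | zero => simpa [iteratedDeriv_zero] using hper
  | succ n IH => rw [iteratedDeriv_succ]; exact periodic_deriv' IH

/-- Leibniz-type decomposition: `(p⬝q)^{(n)} = p⬝q^{(n)} + R` with `R` of class `C^{k-n+1}`. -/
lemma decomp_iteratedDeriv (k : ℕ) (p q : ℝ → ℂ)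
    (hp : ContDiff ℝ (⊤:ℕ∞) p) (hq : ContDiff ℝ (k:ℕ∞) q) :
    ∀ n, n ≤ k → ∃ R : ℝ → ℂ, ContDiff ℝ ((k - n + 1 : ℕ) : ℕ∞) R ∧
      iteratedDeriv n (fun x => p x * q x) = fun x => p x * iteratedDeriv n q x + R x := by
  intro n
  induction n with
  | zero => exact fun _ => ⟨0, contDiff_const, by simp [iteratedDeriv_zero]⟩
  | succ n IH =>
    intro hn
    obtain ⟨R, hR, hEq⟩ := IH (Nat.le_of_succ_le hn)
    have hdq : ContDiff ℝ ((k - n : ℕ) : ℕ∞) (iteratedDeriv n q) := by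
      rw [iteratedDeriv_eq_iterate]
      have h0 : ContDiff ℝ (((k - n) + n : ℕ) : WithTop ℕ∞) q := by
        rw [show (k - n) + n = k from Nat.sub_add_cancel (Nat.le_of_succ_le hn)]
        exact_mod_cast hq
      exact_mod_cast ContDiff.iterate_deriv' (k - n) n h0
    have hp' : ContDiff ℝ (⊤:ℕ∞) (deriv p) := (contDiff_infty_iff_deriv.1 (by exact_mod_cast hp)).2
    have hRd : ContDiff ℝ ((k - (n+1) + 1 : ℕ) : ℕ∞) (deriv R) := by
      have h1 : ContDiff ℝ (((k - (n+1) + 1 : ℕ) : WithTop ℕ∞) + 1) R := by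
        have h3 : ((k - (n+1) + 1 : ℕ) : WithTop ℕ∞) + 1 = ((k - n + 1 : ℕ) : WithTop ℕ∞) := by
          rw [show k - n + 1 = (k - (n+1) + 1) + 1 from by omega]
          push_cast
          ring
        rw [h3]
        exact_mod_cast hR
      exact_mod_cast (contDiff_succ_iff_deriv.1 h1).2.2
    refine ⟨fun x => deriv p x * iteratedDeriv n q x + deriv R x, ?_, ?_⟩
    · apply ContDiff.add
      · apply ContDiff.mul
        · exact hp'.of_le (by exact_mod_cast (le_top : ((k - (n+1) + 1 : ℕ) : ℕ∞) ≤ ⊤))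
        · refine hdq.of_le ?_
          have h4 : k - (n+1) + 1 ≤ k - n := by omega
          exact_mod_cast h4
      · exact hRd
    · rw [iteratedDeriv_succ, hEq]
      funext x
      have h1 : DifferentiableAt ℝ p x :=
        (hp.differentiable (by simp)).differentiableAt
      have h2 : DifferentiableAt ℝ (iteratedDeriv n q) x := by
        refine (hq.differentiable_iteratedDeriv n ?_).differentiableAt
        exact_mod_cast Nat.cast_lt.2 (Nat.lt_of_succ_le hn)
      have h3 : DifferentiableAt ℝ R x := by
        refine (hR.differentiable ?_).differentiableAt
        have h5 : 1 ≤ k - n + 1 := by omega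
        simp
      rw [deriv_fun_add (f := fun y => p y * iteratedDeriv n q y) (h1.mul h2) h3, deriv_fun_mul h1 h2, iteratedDeriv_succ]
      ring

/-- The main Hölder lemma: multiplying by a smooth periodic function preserves the Hölder
property of the top derivative. -/
lemma holder_prod (k : ℕ) (β : NNReal) (hβ1 : (β:ℝ) ≤ 1) (p q : ℝ → ℂ)
    (hp : ContDiff ℝ (⊤:ℕ∞) p) (hq : ContDiff ℝ (k:ℕ∞) q)
    (hpper : Function.Periodic p (2 * Real.pi)) (hqper : Function.Periodic q (2 * Real.pi))
    (C : NNReal) (hqH : HolderWith C β (iteratedDeriv k q)) :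
    ∃ C' : NNReal, HolderWith C' β (iteratedDeriv k (fun x => p x * q x)) := by
  obtain ⟨R, hR, hEq⟩ := decomp_iteratedDeriv k p q hp hq k le_rfl
  rw [Nat.sub_self] at hR
  have hR1 : ContDiff ℝ (1 : ℕ∞) R := by exact_mod_cast hR
  -- p is bounded and Lipschitz
  have hpd : Differentiable ℝ p := hp.differentiable (by simp)
  obtain ⟨Mp, hMp⟩ := periodic_bdd hp.continuous hpper
  have hp' : ContDiff ℝ (⊤:ℕ∞) (deriv p) := (contDiff_infty_iff_deriv.1 (by exact_mod_cast hp)).2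
  obtain ⟨Lp, hLp⟩ := periodic_bdd hp'.continuous (periodic_deriv' hpper)
  have hpLip : LipschitzWith Lp p := lipschitzWith_of_nnnorm_deriv_le hpd hLp
  have hpH : HolderWith (Lp + 2 * Mp) β p := holderWith_of_lip hβ1 hpLip hMp
  -- q^{(k)} is bounded
  have hqkper : Function.Periodic (iteratedDeriv k q) (2 * Real.pi) := periodic_iteratedDeriv hqper k
  obtain ⟨Mq, hMq⟩ := periodic_bdd (hq.continuous_iteratedDeriv k (by exact_mod_cast (le_refl (k:ℕ∞)))) hqkper
  -- R is periodic, bounded, Lipschitz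
  have hpqper : Function.Periodic (fun x => p x * q x) (2 * Real.pi) := fun x => by
    simp only [hpper x, hqper x]
  have hRper : Function.Periodic R (2 * Real.pi) := by
    intro x
    have h1 := congrFun hEq (x + 2 * Real.pi)
    have h2 := congrFun hEq x
    have h3 := periodic_iteratedDeriv hpqper k x
    have h4 := hqkper x
    have h5 := hpper x
    have : p (x + 2*Real.pi) * iteratedDeriv k q (x + 2*Real.pi) + R (x + 2*Real.pi)
        = p x * iteratedDeriv k q x + R x := by rw [← h1, ← h2, h3]
    rw [h4, h5] at this
    exact add_left_cancel this
  obtain ⟨MR, hMR⟩ := periodic_bdd hR1.continuous hRper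
  have hRd : Differentiable ℝ R := hR1.differentiable (by simp)
  obtain ⟨LR, hLR⟩ := periodic_bdd (hR1.continuous_deriv (by exact_mod_cast (le_refl (1:ℕ∞)))) (periodic_deriv' hRper)
  have hRLip : LipschitzWith LR R := lipschitzWith_of_nnnorm_deriv_le hRd hLR
  have hRH : HolderWith (LR + 2 * MR) β R := holderWith_of_lip hβ1 hRLip hMR
  -- combine
  have hprod : HolderWith (Mp * C + (Lp + 2 * Mp) * Mq) β
      (fun x => p x * iteratedDeriv k q x) := holderWith_mul hpH hqH hMp hMq
  refine ⟨Mp * C + (Lp + 2 * Mp) * Mq + (LR + 2 * MR), ?_⟩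
  rw [hEq]
  exact hprod.add hRH

/-- `extD` of a product with `z ↦ z^N`. -/
lemma extD_pow_mul (N : ℕ) (f : ClosedDisc → ℂ) :
    extD (fun z : ClosedDisc => (z:ℂ)^N * f z) = fun w => w^N * extD f w := by
  funext w
  unfold extD
  by_cases hw : w ∈ Metric.closedBall (0:ℂ) 1
  · rw [dif_pos hw, dif_pos hw]
  · rw [dif_neg hw, dif_neg hw, mul_zero]

lemma extD_add (f g : ClosedDisc → ℂ) :
    extD (fun z : ClosedDisc => f z + g z) = fun w => extD f w + extD g w := by
  funext w
  unfold extD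
  by_cases hw : w ∈ Metric.closedBall (0:ℂ) 1
  · rw [dif_pos hw, dif_pos hw, dif_pos hw]
  · rw [dif_neg hw, dif_neg hw, dif_neg hw, add_zero]

/-- Multiplying by `ζ^N` preserves `A^{k,α}`. -/
lemma IsA_pow_mul (k : ℕ) (α : ℝ) (hα : 0 ≤ α) (hα' : α ≤ 1) (N : ℕ) (f : ClosedDisc → ℂ)
    (hf : IsA k α f) : IsA k α (fun z : ClosedDisc => (z:ℂ)^N * f z) := by
  obtain ⟨hc, hd, hck⟩ := hf
  refine ⟨?_, ?_, ?_⟩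
  · rw [extD_pow_mul]
    exact (continuous_pow N).continuousOn.mul hc
  · rw [extD_pow_mul]
    exact ((differentiable_pow N).differentiableOn).mul hd
  · have htr : liftC (bTrace (fun z : ClosedDisc => (z:ℂ)^N * f z)) =
        fun θ => ((Circle.exp θ : Circle) : ℂ)^N * liftC (bTrace f) θ := rfl
    set p : ℝ → ℂ := fun θ => ((Circle.exp θ : Circle) : ℂ)^N with hpdef
    have hpeq : p = fun θ : ℝ => Complex.exp ((N:ℂ) * ((θ:ℂ) * Complex.I)) := by
      funext θ
      rw [hpdef]
      simp only [Circle.coe_exp]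
      rw [← Complex.exp_nat_mul]
    have hp : ContDiff ℝ (⊤:ℕ∞) p := by
      rw [hpeq]
      exact (contDiff_const.mul (Complex.ofRealCLM.contDiff.mul contDiff_const)).cexp
    have hpper : Function.Periodic p (2 * Real.pi) := fun θ => by
      rw [hpdef]
      simp only
      rw [Circle.periodic_exp θ]
    obtain ⟨hqc, C, hqH⟩ := hck
    have hqper : Function.Periodic (liftC (bTrace f)) (2 * Real.pi) := fun θ => by
      unfold liftC
      rw [Circle.periodic_exp θ]
    constructor
    · rw [htr]
      exact (hp.of_le (by exact_mod_cast (le_top : (k:ℕ∞) ≤ ⊤))).mul hqc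
    · rw [htr]
      exact holder_prod k α.toNNReal (by rw [Real.coe_toNNReal α hα]; exact hα') p _
        hp hqc hpper hqper C hqH

end Aux

/-- Odd case of the surjectivity analysis: `m = 2m'+1`, `r - m' ≥ 0`,
`u ∈ R_1`, and `u = u' + u''` is the Szegő decomposition of `u` (`u' = P(u) ∈ A^{k,α}` and
`u''` has only negative Fourier modes, i.e. `u'' = conj(ζ h)` with `h ∈ A^{k,α}`).
Then `u'' = -conj(ζ u')` on `bΔ`, and `f' = ζ^{r-m'} u' ∈ A^{k,α}` satisfies
`ζ^{-(r-m')} f' - ζ^{r-m'} conj(ζ f') = u` on `bΔ`. -/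
theorem stmt_9 (k : ℕ) (α : ℝ) (hα : 0 < α) (hα' : α < 1) (m' : ℕ) (r : ℤ) (m : ℕ)
    (hm : m = 2 * m' + 1) (hr : 0 ≤ r - (m' : ℤ))
    (u : Circle → ℂ) (hu : u ∈ Rm k α 1)
    (u' h : ClosedDisc → ℂ) (hu' : IsA k α u') (hh : IsA k α h)
    (hdec : ∀ z : Circle, u z = u' (bd z) + (starRingEnd ℂ) ((z : ℂ) * h (bd z))) :
    (∀ z : Circle, u z - u' (bd z) = -(starRingEnd ℂ) ((z : ℂ) * u' (bd z))) ∧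
    IsA k α (fun z : ClosedDisc => (z : ℂ) ^ (r - (m' : ℤ)) * u' z) ∧
    ∀ z : Circle,
      (z : ℂ) ^ (-(r - (m' : ℤ))) * ((z : ℂ) ^ (r - (m' : ℤ)) * u' (bd z)) -
        (z : ℂ) ^ (r - (m' : ℤ)) *
          (starRingEnd ℂ) ((z : ℂ) * ((z : ℂ) ^ (r - (m' : ℤ)) * u' (bd z))) = u z := by
  obtain ⟨hu1, hu2⟩ := hu
  have hconjz : ∀ z : Circle, (starRingEnd ℂ) (z : ℂ) = ((z : ℂ))⁻¹ :=
    fun z => ((Circle.coe_inv_eq_conj z).symm.trans (Circle.coe_inv z))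
  have hcc : ∀ z : Circle, (z : ℂ) * (starRingEnd ℂ) (z : ℂ) = 1 := by
    intro z
    rw [Complex.mul_conj, Circle.normSq_coe]
    norm_num
  -- the key boundary identity for `g = u' + h`
  have hb : ∀ z : Circle,
      (u' (bd z) + h (bd z)) + (starRingEnd ℂ) ((z : ℂ) * (u' (bd z) + h (bd z))) = 0 := by
    intro z
    have h1 := hu2 z
    rw [hdec z] at h1
    have hinv : ((z : ℂ))⁻¹ = (starRingEnd ℂ) (z : ℂ) :=
      inv_eq_of_mul_eq_one_right (hcc z)
    simp only [map_add, map_mul, Complex.conj_conj, zpow_one, zpow_neg, neg_mul, one_mul] at h1 ⊢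
    rw [hinv] at h1
    linear_combination h1 - h (bd z) * hcc z
  -- `u' + h` vanishes on the boundary
  have key : ∀ z : Circle, u' (bd z) + h (bd z) = 0 := by
    have hGc : ContinuousOn (extD (fun w : ClosedDisc => u' w + h w)) (Metric.closedBall 0 1) := by
      rw [extD_add]
      exact hu'.1.add hh.1
    have hGd : DifferentiableOn ℂ (extD (fun w : ClosedDisc => u' w + h w)) (Metric.ball 0 1) := by
      rw [extD_add]
      exact hu'.2.1.add hh.2.1
    have hGb : ∀ w ∈ Metric.sphere (0:ℂ) 1,
        ((1 + w) * extD (fun w : ClosedDisc => u' w + h w) w).re = 0 := by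
      intro w hw
      set z : Circle := ⟨w, hw⟩ with hzdef
      have hwz : w = (z : ℂ) := rfl
      have hmem : w ∈ Metric.closedBall (0:ℂ) 1 := Metric.sphere_subset_closedBall hw
      have hext : extD (fun w : ClosedDisc => u' w + h w) w = u' (bd z) + h (bd z) := by
        unfold extD
        rw [dif_pos hmem]
        rfl
      rw [hext]
      have hre := congrArg Complex.re (hb z)
      rw [Complex.add_re, Complex.conj_re, Complex.zero_re] at hre
      rw [hwz, add_mul, one_mul, Complex.add_re]
      rw [Complex.mul_re] at hre ⊢
      linarith
    intro z
    have hmem : (z : ℂ) ∈ Metric.closedBall (0:ℂ) 1 := by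
      simp [Metric.mem_closedBall, Circle.norm_coe]
    have h0 := core_zero hGc hGd hGb (z : ℂ) hmem
    have hext : extD (fun w : ClosedDisc => u' w + h w) (z : ℂ) = u' (bd z) + h (bd z) := by
      unfold extD
      rw [dif_pos hmem]
      rfl
    rw [hext] at h0
    exact h0
  have hhu : ∀ z : Circle, h (bd z) = -u' (bd z) := fun z =>
    eq_neg_of_add_eq_zero_right ((add_comm (u' (bd z)) (h (bd z))) ▸ key z)
  have c1 : ∀ z : Circle, u z - u' (bd z) = -(starRingEnd ℂ) ((z : ℂ) * u' (bd z)) := by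
    intro z
    rw [hdec z, hhu z]
    simp only [mul_neg, map_neg]
    ring
  refine ⟨c1, ?_, ?_⟩
  · -- membership in `A^{k,α}`
    set N : ℕ := (r - (m' : ℤ)).toNat with hNdef
    have hNz : (N : ℤ) = r - (m' : ℤ) := Int.toNat_of_nonneg hr
    have hfun : (fun z : ClosedDisc => (z : ℂ) ^ (r - (m' : ℤ)) * u' z)
        = fun z : ClosedDisc => (z : ℂ) ^ N * u' z := by
      funext z
      rw [← hNz, zpow_natCast]
    rw [hfun]
    exact IsA_pow_mul k α hα.le hα'.le N u' hu'
  · -- the boundary identity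
    intro z
    set w := (z : ℂ) with hwdef
    have hz0 : w ≠ 0 := Circle.coe_ne_zero z
    have hzp : w ^ (r - (m' : ℤ)) ≠ 0 := zpow_ne_zero _ hz0
    have huz : u z = u' (bd z) - (starRingEnd ℂ) (w * u' (bd z)) := by
      have := c1 z
      linear_combination this
    rw [huz]
    simp only [map_mul, hconjz z, map_zpow₀, zpow_neg]
    rw [show (starRingEnd ℂ) w = w⁻¹ from hconjz z, inv_zpow]
    field_simp
end
end
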